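/- arXiv:2309.08199 — 4 statements merged into one kernel-verified Lean document; each statement's English description precedes it below -/
import Mathlib

section
/- (Robustness of the triply robust functional under submodel M3: correct outcome mean and imputation model) Under Assumptions (A1)–(A4), for any ε > 0 and ε' > 0, any measurable functions π* : 𝒳 × 𝒱 → [ε, 1−ε] and ρ* : 𝒳 → [ε', 1], and with h(X) a version of E[m(1,X,V) − m(0,X,V) | σ(X)], one has E[ (R/ρ*(X))·{ (Z/π*(X,V))·(Y − m(1,X,V)) − ((1−Z)/(1−π*(X,V)))·(Y − m(0,X,V)) + m(1,X,V) − m(0,X,V) − h(X) } + h(X) ] = τ. -/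
open MeasureTheory ProbabilityTheory


section Aux
variable {Ω : Type*} [mΩ : MeasurableSpace Ω] {μ : Measure Ω}

lemma trAux_integrable_of_bdd [IsFiniteMeasure μ] {f : Ω → ℝ} {C : ℝ}
    (hf : AEStronglyMeasurable f μ) (h : ∀ᵐ ω ∂μ, |f ω| ≤ C) : Integrable f μ :=
  Integrable.mono' (integrable_const C) hf
    (by filter_upwards [h] with ω hω; simpa [Real.norm_eq_abs] using hω)

lemma trAux_measurable_comap {α : Type*} [MeasurableSpace α] (f : Ω → α) :
    Measurable[MeasurableSpace.comap f inferInstance] f :=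
  Measurable.of_comap_le le_rfl

lemma trAux_comap_le_comap {α γ : Type*} [MeasurableSpace α] [MeasurableSpace γ]
    {T : Ω → γ} {p : γ → α} (hp : Measurable p) :
    MeasurableSpace.comap (fun ω => p (T ω)) inferInstance
      ≤ MeasurableSpace.comap T inferInstance := by
  rw [show (fun ω => p (T ω)) = p ∘ T from rfl, ← MeasurableSpace.comap_comp]
  exact MeasurableSpace.comap_mono hp.comap_le

lemma trAux_comap_pair_generateFrom {α β : Type*} [MeasurableSpace α] [MeasurableSpace β]
    (f : Ω → α) (g : Ω → β) :
    MeasurableSpace.comap (fun ω => (f ω, g ω)) inferInstance =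
      MeasurableSpace.generateFrom
        {s : Set Ω | ∃ A B, MeasurableSet A ∧ MeasurableSet B ∧ s = f ⁻¹' A ∩ g ⁻¹' B} := by
  conv_lhs => rw [show (inferInstance : MeasurableSpace (α × β)) = Prod.instMeasurableSpace
    from rfl, ← generateFrom_prod]
  rw [MeasurableSpace.comap_generateFrom]
  congr 1
  ext s
  constructor
  · rintro ⟨t, ht, rfl⟩
    rcases ht with ⟨A, hA, B, hB, rfl⟩
    exact ⟨A, B, hA, hB, by ext ω; simp⟩
  · rintro ⟨A, B, hA, hB, rfl⟩
    exact ⟨A ×ˢ B, ⟨A, hA, B, hB, rfl⟩, by ext ω; simp⟩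

lemma trAux_isPiSystem_pair {α β : Type*} [MeasurableSpace α] [MeasurableSpace β]
    (f : Ω → α) (g : Ω → β) :
    IsPiSystem {s : Set Ω | ∃ A B, MeasurableSet A ∧ MeasurableSet B ∧ s = f ⁻¹' A ∩ g ⁻¹' B} := by
  rintro s ⟨A, B, hA, hB, rfl⟩ t ⟨A', B', hA', hB', rfl⟩ -
  refine ⟨A ∩ A', B ∩ B', hA.inter hA', hB.inter hB', ?_⟩
  ext ω; simp; tauto

lemma trAux_condexp_abs_bound [IsProbabilityMeasure μ] {m : MeasurableSpace Ω} (hm : m ≤ mΩ)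
    {f g : Ω → ℝ} {C : ℝ} (hfb : ∀ ω, |f ω| ≤ C) (hfint : Integrable f μ)
    (hg : g =ᵐ[μ] μ[f|m]) : ∀ᵐ ω ∂μ, |g ω| ≤ C := by
  have h1 : μ[f|m] ≤ᵐ[μ] μ[(fun _ => C)|m] :=
    condExp_mono hfint (integrable_const _) (ae_of_all _ fun ω => (abs_le.mp (hfb ω)).2)
  have h2 : μ[(fun _ => -C)|m] ≤ᵐ[μ] μ[f|m] :=
    condExp_mono (integrable_const _) hfint (ae_of_all _ fun ω => (abs_le.mp (hfb ω)).1)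
  rw [condExp_const hm] at h1 h2
  filter_upwards [hg, h1, h2] with ω he hu hl
  rw [he]; exact abs_le.mpr ⟨hl, hu⟩

lemma trAux_int_eq [IsProbabilityMeasure μ] {m : MeasurableSpace Ω} (hm : m ≤ mΩ)
    {W w u : Ω → ℝ} (hw : w =ᵐ[μ] μ[W|m]) (hum : StronglyMeasurable[m] u)
    (hWint : Integrable W μ) (huW : Integrable (fun ω => u ω * W ω) μ) :
    ∫ ω, u ω * W ω ∂μ = ∫ ω, u ω * w ω ∂μ := by
  have h2 : μ[(fun ω => u ω * W ω)|m] =ᵐ[μ] fun ω => u ω * (μ[W|m]) ω := by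
    have := condExp_mul_of_stronglyMeasurable_left (μ := μ) hum huW hWint
    filter_upwards [this] with ω hω
    exact hω
  calc ∫ ω, u ω * W ω ∂μ = ∫ ω, (μ[(fun ω => u ω * W ω)|m]) ω ∂μ :=
        (integral_condExp hm).symm
    _ = ∫ ω, u ω * (μ[W|m]) ω ∂μ := integral_congr_ae h2
    _ = ∫ ω, u ω * w ω ∂μ := integral_congr_ae
        (by filter_upwards [hw] with ω hω; rw [hω])

end Aux

section Key
variable {Ω : Type*} [mΩ : MeasurableSpace Ω] {μ : Measure Ω}

lemma trAux_key [StandardBorelSpace Ω] [IsProbabilityMeasure μ]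
    {𝒳 𝒮 : Type*} [MeasurableSpace 𝒳] [MeasurableSpace 𝒮]
    {X : Ω → 𝒳} {S : Ω → 𝒮} (hX : Measurable X) (hS : Measurable S)
    {R : Ω → ℝ} (hRm : Measurable R) (hR01 : ∀ ω, R ω = 0 ∨ R ω = 1)
    (hCI : CondIndepFun (MeasurableSpace.comap X inferInstance)
      (measurable_iff_comap_le.mp hX) R S μ)
    {r : 𝒳 → ℝ} (hrM : Measurable r)
    (hr : (fun ω => r (X ω)) =ᵐ[μ] μ[R | MeasurableSpace.comap X inferInstance]) :
    (fun ω => r (X ω)) =ᵐ[μ]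
      μ[R | MeasurableSpace.comap (fun ω => (X ω, S ω)) inferInstance] := by
  have hmX : MeasurableSpace.comap X inferInstance ≤ mΩ := hX.comap_le
  have hmXS : MeasurableSpace.comap (fun ω => (X ω, S ω)) inferInstance ≤ mΩ :=
    (hX.prodMk hS).comap_le
  have hRb : ∀ ω, |R ω| ≤ 1 := fun ω => by rcases hR01 ω with h | h <;> simp [h]
  have hRint : Integrable R μ :=
    trAux_integrable_of_bdd hRm.aestronglyMeasurable (ae_of_all _ hRb)
  have hrint : Integrable (fun ω => r (X ω)) μ := integrable_condExp.congr hr.symm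
  have hr01 : ∀ᵐ ω ∂μ, |r (X ω)| ≤ 1 :=
    trAux_condexp_abs_bound hmX hRb hRint hr
  -- the indicator identity
  have hRind : (R ⁻¹' {1}).indicator (fun _ => (1 : ℝ)) = R := by
    funext ω; rcases hR01 ω with h | h <;>
      simp [Set.indicator_apply, h, Set.mem_preimage]
  refine (ae_eq_condExp_of_forall_setIntegral_eq hmXS hRint
    (fun s _ _ => hrint.integrableOn) (fun s hs _ => ?_) ?_)
  swap
  · have hle : MeasurableSpace.comap X inferInstance
        ≤ MeasurableSpace.comap (fun ω => (X ω, S ω)) inferInstance :=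
      trAux_comap_le_comap (T := fun ω => (X ω, S ω)) (p := Prod.fst) measurable_fst
    exact StronglyMeasurable.aestronglyMeasurable
      (((hrM.comp (trAux_measurable_comap X)).mono hle le_rfl).stronglyMeasurable)
  -- set integral equality via π-system induction
  refine MeasurableSpace.induction_on_inter
    (m := MeasurableSpace.comap (fun ω => (X ω, S ω)) inferInstance)
    (C := fun t _ => ∫ x in t, r (X x) ∂μ = ∫ x in t, R x ∂μ)
    (trAux_comap_pair_generateFrom X S) (trAux_isPiSystem_pair X S)
    (by simp) ?_ ?_ ?_ _ hs
  · -- basic rectangles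
    rintro t ⟨A, B, hA, hB, rfl⟩
    have hXA : MeasurableSet[MeasurableSpace.comap X inferInstance] (X ⁻¹' A) := ⟨A, hA, rfl⟩
    have hXAamb : MeasurableSet (X ⁻¹' A) := hX hA
    have hSB : MeasurableSet (S ⁻¹' B) := hS hB
    have hindint : Integrable ((S ⁻¹' B).indicator (fun _ => (1 : ℝ))) μ :=
      (integrable_const (1 : ℝ)).indicator hSB
    -- RHS computation
    have hprod := ((condIndepFun_iff_condExp_inter_preimage_eq_mul
        (hm' := measurable_iff_comap_le.mp hX) (μ := μ) hRm hS).mp hCI)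
      {1} B (measurableSet_singleton 1) hB
    have e1 : ∀ x, (S ⁻¹' B).indicator R x
        = (R ⁻¹' {1} ∩ S ⁻¹' B).indicator (fun _ => (1 : ℝ)) x := by
      intro x
      by_cases hxB : x ∈ S ⁻¹' B
      · rcases hR01 x with h | h <;>
          simp [Set.indicator_apply, hxB, h]
      · simp [Set.indicator_apply, hxB]
    have mulint : Integrable (fun ω => r (X ω) * (S ⁻¹' B).indicator (fun _ => (1:ℝ)) ω) μ := by
      refine trAux_integrable_of_bdd (C := 1)
        ((hrM.comp hX).mul (measurable_one.indicator hSB)).aestronglyMeasurable ?_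
      filter_upwards [hr01] with ω hω
      have : |(S ⁻¹' B).indicator (fun _ => (1:ℝ)) ω| ≤ 1 := by
        by_cases hxB : ω ∈ S ⁻¹' B <;> simp [Set.indicator_apply, hxB]
      calc |r (X ω) * _| = |r (X ω)| * |(S ⁻¹' B).indicator (fun _ => (1:ℝ)) ω| := abs_mul _ _
        _ ≤ 1 * 1 := mul_le_mul hω this (abs_nonneg _) zero_le_one
        _ = 1 := one_mul 1
    have pull : μ[fun ω => r (X ω) * (S ⁻¹' B).indicator (fun _ => (1:ℝ)) ω
          | MeasurableSpace.comap X inferInstance]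
        =ᵐ[μ] fun ω => r (X ω) * (μ[(S ⁻¹' B).indicator (fun _ => (1:ℝ))
          | MeasurableSpace.comap X inferInstance]) ω := by
      have := condExp_mul_of_stronglyMeasurable_left (μ := μ)
        ((hrM.comp (trAux_measurable_comap X)).stronglyMeasurable) mulint hindint
      filter_upwards [this] with ω hω; exact hω
    calc ∫ x in X ⁻¹' A ∩ S ⁻¹' B, r (X x) ∂μ
        = ∫ x in X ⁻¹' A, (S ⁻¹' B).indicator (fun ω => r (X ω)) x ∂μ := by
          rw [setIntegral_indicator hSB]
      _ = ∫ x in X ⁻¹' A, r (X x) * (S ⁻¹' B).indicator (fun _ => (1:ℝ)) x ∂μ := by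
          refine setIntegral_congr_ae hXAamb (ae_of_all _ fun x _ => ?_)
          by_cases hxB : x ∈ S ⁻¹' B <;> simp [Set.indicator_apply, hxB]
      _ = ∫ x in X ⁻¹' A, (μ[fun ω => r (X ω) * (S ⁻¹' B).indicator (fun _ => (1:ℝ)) ω
            | MeasurableSpace.comap X inferInstance]) x ∂μ :=
          (setIntegral_condExp hmX mulint hXA).symm
      _ = ∫ x in X ⁻¹' A, r (X x) * (μ[(S ⁻¹' B).indicator (fun _ => (1:ℝ))
            | MeasurableSpace.comap X inferInstance]) x ∂μ :=
          setIntegral_congr_ae hXAamb (pull.mono fun x hx _ => hx)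
      _ = ∫ x in X ⁻¹' A, (μ[R | MeasurableSpace.comap X inferInstance]) x
            * (μ[(S ⁻¹' B).indicator (fun _ => (1:ℝ))
              | MeasurableSpace.comap X inferInstance]) x ∂μ := by
          refine setIntegral_congr_ae hXAamb (hr.mono fun x hx _ => ?_)
          have hx' : r (X x) = (μ[R | MeasurableSpace.comap X inferInstance]) x := hx
          rw [hx']
      _ = ∫ x in X ⁻¹' A, (μ[(R ⁻¹' {1} ∩ S ⁻¹' B).indicator (fun _ => (1:ℝ))
            | MeasurableSpace.comap X inferInstance]) x ∂μ := by
          refine setIntegral_congr_ae hXAamb (hprod.mono fun x hx _ => ?_)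
          rw [hx, hRind]
      _ = ∫ x in X ⁻¹' A, (R ⁻¹' {1} ∩ S ⁻¹' B).indicator (fun _ => (1:ℝ)) x ∂μ :=
          setIntegral_condExp hmX ((integrable_const (1:ℝ)).indicator
            ((hRm (measurableSet_singleton 1)).inter hSB)) hXA
      _ = ∫ x in X ⁻¹' A, (S ⁻¹' B).indicator R x ∂μ :=
          setIntegral_congr_ae hXAamb (ae_of_all _ fun x _ => (e1 x).symm)
      _ = ∫ x in X ⁻¹' A ∩ S ⁻¹' B, R x ∂μ := setIntegral_indicator hSB
  · -- complement
    intro t htm ht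
    have htamb : MeasurableSet t := hmXS t htm
    have tot : ∫ x, r (X x) ∂μ = ∫ x, R x ∂μ := by
      rw [integral_congr_ae hr, integral_condExp hmX]
    have h1 := integral_add_compl htamb hrint
    have h2 := integral_add_compl htamb hRint
    linarith
  · -- disjoint unions
    intro f hdisj hmeas hC
    rw [integral_iUnion (fun i => hmXS _ (hmeas i)) hdisj hrint.integrableOn,
      integral_iUnion (fun i => hmXS _ (hmeas i)) hdisj hRint.integrableOn]
    exact tsum_congr hC

end Key

section Outcome
variable {Ω : Type*} [mΩ : MeasurableSpace Ω] {μ : Measure Ω}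

lemma trAux_integrable_mul [IsFiniteMeasure μ] {f g : Ω → ℝ} {A B : ℝ}
    (hf : Measurable f) (hg : Measurable g)
    (hA : ∀ᵐ ω ∂μ, |f ω| ≤ A) (hB : ∀ᵐ ω ∂μ, |g ω| ≤ B) :
    Integrable (fun ω => f ω * g ω) μ :=
  trAux_integrable_of_bdd (C := A * B) (hf.mul hg).aestronglyMeasurable
    (by filter_upwards [hA, hB] with ω h1 h2
        rw [abs_mul]
        exact mul_le_mul h1 h2 (abs_nonneg _) (le_trans (abs_nonneg _) h1))

end Outcome

lemma trAux_outcome {Ω : Type*} {m2 m3 mB : MeasurableSpace Ω} [mΩ : MeasurableSpace Ω]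
    {μ : Measure Ω} [IsProbabilityMeasure μ] (hm23 : m2 ≤ m3) (hm3 : m3 ≤ mΩ)
    (hm2 : m2 ≤ mΩ) (hm2B : m2 ≤ mB) (hmB : mB ≤ mΩ)
    {ζ Yv Y' q π2 w3 : Ω → ℝ} {C C' : ℝ}
    (hζm : Measurable[mΩ] ζ) (hYvm : Measurable[mΩ] Yv) (hY'm : Measurable[mΩ] Y')
    (hqm : Measurable[mΩ] q) (hπm : Measurable[mΩ] π2)
    (hζb : ∀ ω, |ζ ω| ≤ 1) (hYvb : ∀ ω, |Yv ω| ≤ C) (hY'b : ∀ ω, |Y' ω| ≤ C)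
    (hqb : ∀ ω, |q ω| ≤ C') (hπb : ∀ᵐ ω ∂μ, |π2 ω| ≤ 1)
    (hζsm3 : StronglyMeasurable[m3] ζ) (hqsm2 : StronglyMeasurable[m2] q)
    (hπsm2 : StronglyMeasurable[m2] π2) (hY'smB : StronglyMeasurable[mB] Y')
    (hw3 : w3 =ᵐ[μ] μ[Yv|m3]) (hζq : ∀ ω, ζ ω * w3 ω = q ω * ζ ω)
    (hζY : ∀ ω, ζ ω * Yv ω = ζ ω * Y' ω)
    (hπB : π2 =ᵐ[μ] μ[ζ|mB])
    (hπpos : ∀ᵐ ω ∂μ, 0 < π2 ω) :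
    ∫ ω, q ω ∂μ = ∫ ω, Y' ω ∂μ := by
  have hζint : Integrable ζ μ :=
    trAux_integrable_of_bdd hζm.aestronglyMeasurable (ae_of_all _ hζb)
  have hYvint : Integrable Yv μ :=
    trAux_integrable_of_bdd hYvm.aestronglyMeasurable (ae_of_all _ hYvb)
  have hY'int : Integrable Y' μ :=
    trAux_integrable_of_bdd hY'm.aestronglyMeasurable (ae_of_all _ hY'b)
  have hπint : Integrable π2 μ := trAux_integrable_of_bdd hπm.aestronglyMeasurable hπb
  have hζYv : Integrable (fun ω => ζ ω * Yv ω) μ :=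
    trAux_integrable_mul hζm hYvm (ae_of_all _ hζb) (ae_of_all _ hYvb)
  have hqζ : Integrable (fun ω => q ω * ζ ω) μ :=
    trAux_integrable_mul hqm hζm (ae_of_all _ hqb) (ae_of_all _ hζb)
  have hY'ζ : Integrable (fun ω => Y' ω * ζ ω) μ :=
    trAux_integrable_mul hY'm hζm (ae_of_all _ hY'b) (ae_of_all _ hζb)
  have hπY' : Integrable (fun ω => π2 ω * Y' ω) μ :=
    trAux_integrable_mul hπm hY'm hπb (ae_of_all _ hY'b)
  -- chain 1
  have A1 : μ[fun ω => ζ ω * Yv ω|m3] =ᵐ[μ] fun ω => ζ ω * (μ[Yv|m3]) ω := by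
    have := condExp_mul_of_stronglyMeasurable_left (μ := μ) hζsm3 hζYv hYvint
    filter_upwards [this] with ω hω; exact hω
  have A2 : (fun ω => ζ ω * (μ[Yv|m3]) ω) =ᵐ[μ] fun ω => q ω * ζ ω := by
    filter_upwards [hw3] with ω hω
    rw [← hω]; exact hζq ω
  have A3 : μ[fun ω => ζ ω * Yv ω|m2] =ᵐ[μ] μ[fun ω => q ω * ζ ω|m2] :=
    ((condExp_condExp_of_le hm23 hm3).symm).trans (condExp_congr_ae (A1.trans A2))
  have A4 : μ[fun ω => q ω * ζ ω|m2] =ᵐ[μ] fun ω => q ω * (μ[ζ|m2]) ω := by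
    have := condExp_mul_of_stronglyMeasurable_left (μ := μ) hqsm2 hqζ hζint
    filter_upwards [this] with ω hω; exact hω
  have hπ2 : π2 =ᵐ[μ] μ[ζ|m2] := by
    have t1 : μ[ζ|m2] =ᵐ[μ] μ[μ[ζ|mB]|m2] := (condExp_condExp_of_le hm2B hmB).symm
    have t2 : μ[μ[ζ|mB]|m2] =ᵐ[μ] μ[π2|m2] := condExp_congr_ae hπB.symm
    have t3 : μ[π2|m2] = π2 := condExp_of_stronglyMeasurable hm2 hπsm2 hπint
    exact ((t1.trans t2).trans (by rw [t3])).symm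
  have A5 : (fun ω => q ω * (μ[ζ|m2]) ω) =ᵐ[μ] fun ω => q ω * π2 ω := by
    filter_upwards [hπ2] with ω hω; rw [← hω]
  -- chain 2
  have B1 : (fun ω => ζ ω * Yv ω) = fun ω => ζ ω * Y' ω := funext hζY
  have B2 : μ[fun ω => ζ ω * Y' ω|mB] =ᵐ[μ] fun ω => Y' ω * (μ[ζ|mB]) ω := by
    have hcomm : (fun ω => ζ ω * Y' ω) = fun ω => Y' ω * ζ ω := funext fun ω => mul_comm _ _
    rw [hcomm]
    have := condExp_mul_of_stronglyMeasurable_left (μ := μ) hY'smB hY'ζ hζint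
    filter_upwards [this] with ω hω; exact hω
  have B3 : (fun ω => Y' ω * (μ[ζ|mB]) ω) =ᵐ[μ] fun ω => Y' ω * π2 ω := by
    filter_upwards [hπB] with ω hω; rw [← hω]
  have B4 : μ[fun ω => ζ ω * Y' ω|m2] =ᵐ[μ] μ[fun ω => Y' ω * π2 ω|m2] :=
    ((condExp_condExp_of_le hm2B hmB).symm).trans (condExp_congr_ae (B2.trans B3))
  have B5 : μ[fun ω => Y' ω * π2 ω|m2] =ᵐ[μ] fun ω => π2 ω * (μ[Y'|m2]) ω := by
    have hcomm : (fun ω => Y' ω * π2 ω) = fun ω => π2 ω * Y' ω := funext fun ω => mul_comm _ _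
    rw [hcomm]
    have := condExp_mul_of_stronglyMeasurable_left (μ := μ) hπsm2 hπY' hY'int
    filter_upwards [this] with ω hω; exact hω
  -- combine
  have main : (fun ω => q ω * π2 ω) =ᵐ[μ] fun ω => π2 ω * (μ[Y'|m2]) ω := by
    have L : μ[fun ω => ζ ω * Yv ω|m2] =ᵐ[μ] fun ω => q ω * π2 ω := A3.trans (A4.trans A5)
    have Rr : μ[fun ω => ζ ω * Yv ω|m2] =ᵐ[μ] fun ω => π2 ω * (μ[Y'|m2]) ω := by
      rw [B1]; exact B4.trans B5
    exact L.symm.trans Rr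
  have hq : q =ᵐ[μ] μ[Y'|m2] := by
    filter_upwards [main, hπpos] with ω hω hpos
    have h1 : π2 ω * q ω = π2 ω * (μ[Y'|m2]) ω := by
      have hω' : q ω * π2 ω = π2 ω * (μ[Y'|m2]) ω := hω
      rw [mul_comm (π2 ω) (q ω)]; exact hω'
    exact mul_left_cancel₀ (ne_of_gt hpos) h1
  rw [integral_congr_ae hq, integral_condExp hm2]

theorem triply_robust_M3
    {Ω 𝒳 𝒱 : Type*}
    [MeasurableSpace Ω] [StandardBorelSpace Ω] [Nonempty Ω]
    [MeasurableSpace 𝒳] [StandardBorelSpace 𝒳]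
    [MeasurableSpace 𝒱] [StandardBorelSpace 𝒱]
    (μ : Measure Ω) [IsProbabilityMeasure μ]
    (X : Ω → 𝒳) (V : Ω → 𝒱) (Z R Y0 Y1 : Ω → ℝ)
    (hX : Measurable X) (hV : Measurable V) (hZ : Measurable Z)
    (hR : Measurable R) (hY0 : Measurable Y0) (hY1 : Measurable Y1)
    (hZ01 : ∀ ω, Z ω = 0 ∨ Z ω = 1) (hR01 : ∀ ω, R ω = 0 ∨ R ω = 1)
    (hYbd : ∃ C, ∀ ω, |Y0 ω| ≤ C ∧ |Y1 ω| ≤ C)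
    (Y : Ω → ℝ) (hYdef : ∀ ω, Y ω = Z ω * Y1 ω + (1 - Z ω) * Y0 ω)
    (pi : 𝒳 × 𝒱 → ℝ) (rho : 𝒳 → ℝ)
    (hpiM : Measurable pi) (hrhoM : Measurable rho)
    (hpi : (fun ω => pi (X ω, V ω)) =ᵐ[μ]
      μ[Z | MeasurableSpace.comap (fun ω => (X ω, V ω)) inferInstance])
    (hrho : (fun ω => rho (X ω)) =ᵐ[μ]
      μ[R | MeasurableSpace.comap X inferInstance])
    (hA1 : CondIndepFun (MeasurableSpace.comap X inferInstance)
      (measurable_iff_comap_le.mp hX) R (fun ω => (Y ω, Z ω, V ω)) μ)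
    (hA2 : CondIndepFun (MeasurableSpace.comap (fun ω => (X ω, V ω)) inferInstance)
      (measurable_iff_comap_le.mp (hX.prodMk hV)) Z (fun ω => (Y0 ω, Y1 ω)) μ)
    (hA3 : ∀ᵐ ω ∂μ, 0 < pi (X ω, V ω) ∧ pi (X ω, V ω) < 1)
    (hA4 : ∀ᵐ ω ∂μ, 0 < rho (X ω))
    (mo : ℝ × 𝒳 × 𝒱 → ℝ) (hmoM : Measurable mo) (hmoBd : ∃ C, ∀ p, |mo p| ≤ C)
    (hmo : (fun ω => mo (Z ω, X ω, V ω)) =ᵐ[μ]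
      μ[Y | MeasurableSpace.comap (fun ω => (Z ω, X ω, V ω)) inferInstance])
    (ε ε' : ℝ) (hε : 0 < ε) (hε' : 0 < ε')
    (pistar : 𝒳 × 𝒱 → ℝ) (hpistarM : Measurable pistar)
    (hpistarRange : ∀ p, ε ≤ pistar p ∧ pistar p ≤ 1 - ε)
    (rhostar : 𝒳 → ℝ) (hrhostarM : Measurable rhostar)
    (hrhostarRange : ∀ x, ε' ≤ rhostar x ∧ rhostar x ≤ 1)
    (h : 𝒳 → ℝ) (hhM : Measurable h)
    (hh : (fun ω => h (X ω)) =ᵐ[μ]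
      μ[(fun ω => mo (1, X ω, V ω) - mo (0, X ω, V ω)) |
        MeasurableSpace.comap X inferInstance]) :
    ∫ ω, (R ω / rhostar (X ω)) *
          ((Z ω / pistar (X ω, V ω)) * (Y ω - mo (1, X ω, V ω))
            - ((1 - Z ω) / (1 - pistar (X ω, V ω))) * (Y ω - mo (0, X ω, V ω))
            + mo (1, X ω, V ω) - mo (0, X ω, V ω) - h (X ω))
        + h (X ω) ∂μ
      = ∫ ω, (Y1 ω - Y0 ω) ∂μ := by
  classical
  obtain ⟨C, hC⟩ := hYbd
  obtain ⟨C', hC'⟩ := hmoBd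
  have habs : ∀ (a b A B : ℝ), |a| ≤ A → |b| ≤ B → |a * b| ≤ A * B := fun a b A B ha hb => by
    rw [abs_mul]; exact mul_le_mul ha hb (abs_nonneg _) (le_trans (abs_nonneg _) ha)
  have tri : ∀ a b c d e : ℝ, |a - b + c - d - e| ≤ |a| + |b| + |c| + |d| + |e| := by
    intro a b c d e
    calc |a - b + c - d - e| ≤ |a - b + c - d| + |e| := abs_sub _ _
      _ ≤ (|a - b + c| + |d|) + |e| := add_le_add_left (abs_sub _ _) _
      _ ≤ ((|a - b| + |c|) + |d|) + |e| := add_le_add_left (add_le_add_left (abs_add_le _ _) _) _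
      _ ≤ (((|a| + |b|) + |c|) + |d|) + |e| :=
          add_le_add_left (add_le_add_left (add_le_add_left (abs_sub _ _) _) _) _
      _ = |a| + |b| + |c| + |d| + |e| := by ring
  have hYm : Measurable Y := by
    have hYe : Y = fun ω => Z ω * Y1 ω + (1 - Z ω) * Y0 ω := funext hYdef
    rw [hYe]; exact (hZ.mul hY1).add ((measurable_const.sub hZ).mul hY0)
  have hYb : ∀ ω, |Y ω| ≤ C := by
    intro ω; rw [hYdef ω]
    rcases hZ01 ω with h0 | h0 <;> rw [h0]
    · simpa using (hC ω).1
    · simpa using (hC ω).2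
  -- σ-algebra inequalities
  have hmX : MeasurableSpace.comap X inferInstance ≤ ‹MeasurableSpace Ω› := hX.comap_le
  have hmXV : MeasurableSpace.comap (fun ω => (X ω, V ω)) inferInstance
      ≤ ‹MeasurableSpace Ω› := (hX.prodMk hV).comap_le
  have hmZXV : MeasurableSpace.comap (fun ω => (Z ω, X ω, V ω)) inferInstance
      ≤ ‹MeasurableSpace Ω› := (hZ.prodMk (hX.prodMk hV)).comap_le
  have hmB1 : MeasurableSpace.comap (fun ω => (X ω, (Y ω, Z ω, V ω))) inferInstance
      ≤ ‹MeasurableSpace Ω› := (hX.prodMk (hYm.prodMk (hZ.prodMk hV))).comap_le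
  have hmB2 : MeasurableSpace.comap (fun ω => ((X ω, V ω), (Y0 ω, Y1 ω))) inferInstance
      ≤ ‹MeasurableSpace Ω› := ((hX.prodMk hV).prodMk (hY0.prodMk hY1)).comap_le
  have hm23 : MeasurableSpace.comap (fun ω => (X ω, V ω)) inferInstance
      ≤ MeasurableSpace.comap (fun ω => (Z ω, X ω, V ω)) inferInstance :=
    trAux_comap_le_comap (T := fun ω => (Z ω, X ω, V ω)) (p := Prod.snd) measurable_snd
  have hm2B : MeasurableSpace.comap (fun ω => (X ω, V ω)) inferInstance
      ≤ MeasurableSpace.comap (fun ω => ((X ω, V ω), (Y0 ω, Y1 ω))) inferInstance :=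
    trAux_comap_le_comap (T := fun ω => ((X ω, V ω), (Y0 ω, Y1 ω))) (p := Prod.fst) measurable_fst
  -- key conditional-independence consequences
  have hK1 : (fun ω => rho (X ω)) =ᵐ[μ]
      μ[R | MeasurableSpace.comap (fun ω => (X ω, (Y ω, Z ω, V ω))) inferInstance] :=
    trAux_key hX (hYm.prodMk (hZ.prodMk hV)) hR hR01 hA1 hrhoM hrho
  have hK2 : (fun ω => pi (X ω, V ω)) =ᵐ[μ]
      μ[Z | MeasurableSpace.comap (fun ω => ((X ω, V ω), (Y0 ω, Y1 ω))) inferInstance] :=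
    trAux_key (hX.prodMk hV) (hY0.prodMk hY1) hZ hZ01 hA2 hpiM hpi
  -- bounds and integrability
  have hZb : ∀ ω, |Z ω| ≤ 1 := fun ω => by rcases hZ01 ω with h0 | h0 <;> simp [h0]
  have hRb : ∀ ω, |R ω| ≤ 1 := fun ω => by rcases hR01 ω with h0 | h0 <;> simp [h0]
  have hRint : Integrable R μ := trAux_integrable_of_bdd hR.aestronglyMeasurable (ae_of_all _ hRb)
  have hZint : Integrable Z μ := trAux_integrable_of_bdd hZ.aestronglyMeasurable (ae_of_all _ hZb)
  have hYint : Integrable Y μ := trAux_integrable_of_bdd hYm.aestronglyMeasurable (ae_of_all _ hYb)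
  have hY1int : Integrable Y1 μ :=
    trAux_integrable_of_bdd hY1.aestronglyMeasurable (ae_of_all _ fun ω => (hC ω).2)
  have hY0int : Integrable Y0 μ :=
    trAux_integrable_of_bdd hY0.aestronglyMeasurable (ae_of_all _ fun ω => (hC ω).1)
  have hmo1m : Measurable (fun ω => mo (1, X ω, V ω)) :=
    hmoM.comp (measurable_const.prodMk (hX.prodMk hV))
  have hmo0m : Measurable (fun ω => mo (0, X ω, V ω)) :=
    hmoM.comp (measurable_const.prodMk (hX.prodMk hV))
  have hmoZm : Measurable (fun ω => mo (Z ω, X ω, V ω)) :=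
    hmoM.comp (hZ.prodMk (hX.prodMk hV))
  have hmo1int : Integrable (fun ω => mo (1, X ω, V ω)) μ :=
    trAux_integrable_of_bdd hmo1m.aestronglyMeasurable (ae_of_all _ fun ω => hC' _)
  have hmo0int : Integrable (fun ω => mo (0, X ω, V ω)) μ :=
    trAux_integrable_of_bdd hmo0m.aestronglyMeasurable (ae_of_all _ fun ω => hC' _)
  have hDint : Integrable (fun ω => mo (1, X ω, V ω) - mo (0, X ω, V ω)) μ :=
    hmo1int.sub hmo0int
  have hDb : ∀ ω, |mo (1, X ω, V ω) - mo (0, X ω, V ω)| ≤ C' + C' := fun ω =>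
    (abs_sub _ _).trans (add_le_add (hC' _) (hC' _))
  have hhb : ∀ᵐ ω ∂μ, |h (X ω)| ≤ C' + C' := trAux_condexp_abs_bound hmX hDb hDint hh
  have hhXm : Measurable (fun ω => h (X ω)) := hhM.comp hX
  have hhXint : Integrable (fun ω => h (X ω)) μ :=
    trAux_integrable_of_bdd hhXm.aestronglyMeasurable hhb
  have hrhob : ∀ᵐ ω ∂μ, |rho (X ω)| ≤ 1 := trAux_condexp_abs_bound hmX hRb hRint hrho
  have hπb : ∀ᵐ ω ∂μ, |pi (X ω, V ω)| ≤ 1 := by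
    filter_upwards [hA3] with ω h3
    exact abs_le.mpr ⟨by linarith [h3.1], by linarith [h3.2]⟩
  -- pistar / rhostar facts
  have hrs : ∀ x, |(rhostar x)⁻¹| ≤ ε'⁻¹ := fun x => by
    have h1 := (hrhostarRange x).1
    have h2 : 0 < rhostar x := lt_of_lt_of_le hε' h1
    rw [abs_of_nonneg (inv_nonneg.mpr h2.le)]
    exact inv_anti₀ hε' h1
  have hεltp : ∀ p, 0 < pistar p := fun p => lt_of_lt_of_le hε (hpistarRange p).1
  have hεlt1p : ∀ p, 0 < 1 - pistar p := fun p => by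
    have := (hpistarRange p).2; linarith
  have hZdiv : ∀ ω, |Z ω / pistar (X ω, V ω)| ≤ ε⁻¹ := fun ω => by
    rcases hZ01 ω with h0 | h0 <;> rw [h0]
    · simpa using inv_nonneg.mpr hε.le
    · have h1 : (1:ℝ) / pistar (X ω, V ω) ≤ 1 / ε :=
        one_div_le_one_div_of_le hε (hpistarRange _).1
      rw [abs_of_nonneg (le_of_lt (div_pos one_pos (hεltp _)))]
      simpa [one_div] using h1
  have hZdiv' : ∀ ω, |(1 - Z ω) / (1 - pistar (X ω, V ω))| ≤ ε⁻¹ := fun ω => by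
    rcases hZ01 ω with h0 | h0 <;> rw [h0]
    · have hge : ε ≤ 1 - pistar (X ω, V ω) := by
        have := (hpistarRange (X ω, V ω)).2; linarith
      have h1 : (1:ℝ) / (1 - pistar (X ω, V ω)) ≤ 1 / ε := one_div_le_one_div_of_le hε hge
      rw [show (1:ℝ) - 0 = 1 from by ring,
        abs_of_nonneg (le_of_lt (div_pos one_pos (hεlt1p _)))]
      simpa [one_div] using h1
    · simpa using inv_nonneg.mpr hε.le

  -- the main function Φ and the pieces ua, ub, uc
  set Φ : Ω → ℝ := fun ω =>
    (rhostar (X ω))⁻¹ *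
      ((Z ω / pistar (X ω, V ω)) * (Y ω - mo (1, X ω, V ω))
        - ((1 - Z ω) / (1 - pistar (X ω, V ω))) * (Y ω - mo (0, X ω, V ω))
        + mo (1, X ω, V ω) - mo (0, X ω, V ω) - h (X ω)) with hPhidef
  set uc : Ω → ℝ := fun ω => rho (X ω) * (rhostar (X ω))⁻¹ with hucdef
  set ua : Ω → ℝ := fun ω => uc ω * (Z ω / pistar (X ω, V ω)) with huadef
  set ub : Ω → ℝ := fun ω => -(uc ω * ((1 - Z ω) / (1 - pistar (X ω, V ω)))) with hubdef
  have hπsM : Measurable (fun ω => pistar (X ω, V ω)) := hpistarM.comp (hX.prodMk hV)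
  have hucm : Measurable uc := by
    rw [hucdef]; exact (hrhoM.comp hX).mul ((hrhostarM.comp hX).inv)
  have huam : Measurable ua := by
    rw [huadef]; exact hucm.mul (hZ.div hπsM)
  have hubm : Measurable ub := by
    rw [hubdef]; exact (hucm.mul ((measurable_const.sub hZ).div (measurable_const.sub hπsM))).neg
  have hPhim : Measurable Φ := by
    rw [hPhidef]
    exact ((hrhostarM.comp hX).inv).mul
      (((((hZ.div hπsM).mul (hYm.sub hmo1m)).sub
        (((measurable_const.sub hZ).div (measurable_const.sub hπsM)).mul
          (hYm.sub hmo0m))).add hmo1m |>.sub hmo0m).sub hhXm)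
  -- a.e. bounds
  have hucb : ∀ᵐ ω ∂μ, |uc ω| ≤ 1 * ε'⁻¹ := by
    filter_upwards [hrhob] with ω h1
    rw [hucdef]; exact habs _ _ _ _ h1 (hrs (X ω))
  have huab : ∀ᵐ ω ∂μ, |ua ω| ≤ 1 * ε'⁻¹ * ε⁻¹ := by
    filter_upwards [hucb] with ω h1
    rw [huadef]; exact habs _ _ _ _ h1 (hZdiv ω)
  have hubb : ∀ᵐ ω ∂μ, |ub ω| ≤ 1 * ε'⁻¹ * ε⁻¹ := by
    filter_upwards [hucb] with ω h1
    rw [hubdef, abs_neg]; exact habs _ _ _ _ h1 (hZdiv' ω)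
  have hPhib : ∀ᵐ ω ∂μ, |Φ ω|
      ≤ ε'⁻¹ * (ε⁻¹ * (C + C') + ε⁻¹ * (C + C') + C' + C' + (C' + C')) := by
    filter_upwards [hhb] with ω hb
    rw [hPhidef]
    refine habs _ _ _ _ (hrs (X ω)) ?_
    have h1 : |Z ω / pistar (X ω, V ω) * (Y ω - mo (1, X ω, V ω))| ≤ ε⁻¹ * (C + C') :=
      habs _ _ _ _ (hZdiv ω) ((abs_sub _ _).trans (add_le_add (hYb ω) (hC' _)))
    have h2 : |(1 - Z ω) / (1 - pistar (X ω, V ω)) * (Y ω - mo (0, X ω, V ω))|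
        ≤ ε⁻¹ * (C + C') :=
      habs _ _ _ _ (hZdiv' ω) ((abs_sub _ _).trans (add_le_add (hYb ω) (hC' _)))
    have h3 := tri (Z ω / pistar (X ω, V ω) * (Y ω - mo (1, X ω, V ω)))
      ((1 - Z ω) / (1 - pistar (X ω, V ω)) * (Y ω - mo (0, X ω, V ω)))
      (mo (1, X ω, V ω)) (mo (0, X ω, V ω)) (h (X ω))
    have h4 := hC' (1, X ω, V ω)
    have h5 := hC' (0, X ω, V ω)
    linarith
  -- product integrability
  have huaY : Integrable (fun ω => ua ω * Y ω) μ :=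
    trAux_integrable_mul huam hYm huab (ae_of_all _ hYb)
  have huamoZ : Integrable (fun ω => ua ω * mo (Z ω, X ω, V ω)) μ :=
    trAux_integrable_mul huam hmoZm huab (ae_of_all _ fun ω => hC' _)
  have hubY : Integrable (fun ω => ub ω * Y ω) μ :=
    trAux_integrable_mul hubm hYm hubb (ae_of_all _ hYb)
  have hubmoZ : Integrable (fun ω => ub ω * mo (Z ω, X ω, V ω)) μ :=
    trAux_integrable_mul hubm hmoZm hubb (ae_of_all _ fun ω => hC' _)
  have hucD : Integrable
      (fun ω => uc ω * (mo (1, X ω, V ω) - mo (0, X ω, V ω))) μ :=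
    trAux_integrable_mul hucm (hmo1m.sub hmo0m) hucb (ae_of_all _ hDb)
  have huchX : Integrable (fun ω => uc ω * h (X ω)) μ :=
    trAux_integrable_mul hucm hhXm hucb hhb
  have hPhiR : Integrable (fun ω => Φ ω * R ω) μ :=
    trAux_integrable_mul hPhim hR hPhib (ae_of_all _ hRb)
  -- strong measurability w.r.t. sub-σ-algebras
  have hT1 := trAux_measurable_comap (fun ω => (X ω, (Y ω, Z ω, V ω)))
  have hXc1 : Measurable[MeasurableSpace.comap (fun ω => (X ω, (Y ω, Z ω, V ω)))
      inferInstance] X := measurable_fst.comp hT1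
  have hYc1 : Measurable[MeasurableSpace.comap (fun ω => (X ω, (Y ω, Z ω, V ω)))
      inferInstance] Y := measurable_fst.comp (measurable_snd.comp hT1)
  have hZc1 : Measurable[MeasurableSpace.comap (fun ω => (X ω, (Y ω, Z ω, V ω)))
      inferInstance] Z := measurable_fst.comp (measurable_snd.comp (measurable_snd.comp hT1))
  have hVc1 : Measurable[MeasurableSpace.comap (fun ω => (X ω, (Y ω, Z ω, V ω)))
      inferInstance] V := measurable_snd.comp (measurable_snd.comp (measurable_snd.comp hT1))
  have hPhism : StronglyMeasurable[MeasurableSpace.comap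
      (fun ω => (X ω, (Y ω, Z ω, V ω))) inferInstance] Φ := by
    rw [hPhidef]
    refine Measurable.stronglyMeasurable ?_
    exact ((hrhostarM.comp hXc1).inv).mul
      (((((hZc1.div (hpistarM.comp (hXc1.prodMk hVc1))).mul
        (hYc1.sub (hmoM.comp (measurable_const.prodMk (hXc1.prodMk hVc1))))).sub
        (((measurable_const.sub hZc1).div
          (measurable_const.sub (hpistarM.comp (hXc1.prodMk hVc1)))).mul
          (hYc1.sub (hmoM.comp (measurable_const.prodMk (hXc1.prodMk hVc1)))))).add
        (hmoM.comp (measurable_const.prodMk (hXc1.prodMk hVc1)))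
        |>.sub (hmoM.comp (measurable_const.prodMk (hXc1.prodMk hVc1)))).sub
        (hhM.comp hXc1))
  have hT3 := trAux_measurable_comap (fun ω => (Z ω, X ω, V ω))
  have hZc3 : Measurable[MeasurableSpace.comap (fun ω => (Z ω, X ω, V ω))
      inferInstance] Z := measurable_fst.comp hT3
  have hXc3 : Measurable[MeasurableSpace.comap (fun ω => (Z ω, X ω, V ω))
      inferInstance] X := measurable_fst.comp (measurable_snd.comp hT3)
  have hVc3 : Measurable[MeasurableSpace.comap (fun ω => (Z ω, X ω, V ω))
      inferInstance] V := measurable_snd.comp (measurable_snd.comp hT3)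
  have huasm : StronglyMeasurable[MeasurableSpace.comap
      (fun ω => (Z ω, X ω, V ω)) inferInstance] ua := by
    rw [huadef, hucdef]
    refine Measurable.stronglyMeasurable ?_
    exact ((hrhoM.comp hXc3).mul ((hrhostarM.comp hXc3).inv)).mul
      (hZc3.div (hpistarM.comp (hXc3.prodMk hVc3)))
  have hubsm : StronglyMeasurable[MeasurableSpace.comap
      (fun ω => (Z ω, X ω, V ω)) inferInstance] ub := by
    rw [hubdef, hucdef]
    refine Measurable.stronglyMeasurable ?_
    exact (((hrhoM.comp hXc3).mul ((hrhostarM.comp hXc3).inv)).mul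
      ((measurable_const.sub hZc3).div
        (measurable_const.sub (hpistarM.comp (hXc3.prodMk hVc3))))).neg
  have hTX := trAux_measurable_comap X
  have hucsm : StronglyMeasurable[MeasurableSpace.comap X inferInstance] uc := by
    rw [hucdef]
    refine Measurable.stronglyMeasurable ?_
    exact (hrhoM.comp hTX).mul ((hrhostarM.comp hTX).inv)
  -- the three vanishing integrals
  have hIa : ∫ ω, ua ω * (Y ω - mo (Z ω, X ω, V ω)) ∂μ = 0 := by
    have e := trAux_int_eq hmZXV hmo huasm hYint huaY
    have hsplit : (fun ω => ua ω * (Y ω - mo (Z ω, X ω, V ω)))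
        = fun ω => ua ω * Y ω - ua ω * mo (Z ω, X ω, V ω) := funext fun ω => by ring
    rw [hsplit, integral_sub huaY huamoZ, e, sub_self]
  have hIb : ∫ ω, ub ω * (Y ω - mo (Z ω, X ω, V ω)) ∂μ = 0 := by
    have e := trAux_int_eq hmZXV hmo hubsm hYint hubY
    have hsplit : (fun ω => ub ω * (Y ω - mo (Z ω, X ω, V ω)))
        = fun ω => ub ω * Y ω - ub ω * mo (Z ω, X ω, V ω) := funext fun ω => by ring
    rw [hsplit, integral_sub hubY hubmoZ, e, sub_self]
  have hIc : ∫ ω, uc ω * (mo (1, X ω, V ω) - mo (0, X ω, V ω) - h (X ω)) ∂μ = 0 := by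
    have e := trAux_int_eq hmX hh hucsm hDint hucD
    have hsplit : (fun ω => uc ω * (mo (1, X ω, V ω) - mo (0, X ω, V ω) - h (X ω)))
        = fun ω => uc ω * (mo (1, X ω, V ω) - mo (0, X ω, V ω)) - uc ω * h (X ω) :=
      funext fun ω => by ring
    rw [hsplit, integral_sub hucD huchX, e, sub_self]
  -- identification of the outcome means
  have hT2 := trAux_measurable_comap (fun ω => ((X ω, V ω), (Y0 ω, Y1 ω)))
  have hTXV := trAux_measurable_comap (fun ω => (X ω, V ω))
  have hZsm3 : StronglyMeasurable[MeasurableSpace.comap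
      (fun ω => (Z ω, X ω, V ω)) inferInstance] Z := hZc3.stronglyMeasurable
  have hmo1sm2 : StronglyMeasurable[MeasurableSpace.comap
      (fun ω => (X ω, V ω)) inferInstance] (fun ω => mo (1, X ω, V ω)) :=
    ((hmoM.comp (measurable_const.prodMk measurable_id)).comp hTXV).stronglyMeasurable
  have hmo0sm2 : StronglyMeasurable[MeasurableSpace.comap
      (fun ω => (X ω, V ω)) inferInstance] (fun ω => mo (0, X ω, V ω)) :=
    ((hmoM.comp (measurable_const.prodMk measurable_id)).comp hTXV).stronglyMeasurable
  have hpism2 : StronglyMeasurable[MeasurableSpace.comap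
      (fun ω => (X ω, V ω)) inferInstance] (fun ω => pi (X ω, V ω)) :=
    (hpiM.comp hTXV).stronglyMeasurable
  have hpism2' : StronglyMeasurable[MeasurableSpace.comap
      (fun ω => (X ω, V ω)) inferInstance] (fun ω => 1 - pi (X ω, V ω)) :=
    ((measurable_const.sub hpiM).comp hTXV).stronglyMeasurable
  have hY1smB : StronglyMeasurable[MeasurableSpace.comap
      (fun ω => ((X ω, V ω), (Y0 ω, Y1 ω))) inferInstance] Y1 :=
    ((measurable_snd.comp measurable_snd).comp hT2).stronglyMeasurable
  have hY0smB : StronglyMeasurable[MeasurableSpace.comap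
      (fun ω => ((X ω, V ω), (Y0 ω, Y1 ω))) inferInstance] Y0 :=
    ((measurable_fst.comp measurable_snd).comp hT2).stronglyMeasurable
  have hIm1 : ∫ ω, mo (1, X ω, V ω) ∂μ = ∫ ω, Y1 ω ∂μ :=
    trAux_outcome hm23 hmZXV hmXV hm2B hmB2
      hZ hYm hY1 hmo1m (hpiM.comp (hX.prodMk hV))
      hZb hYb (fun ω => (hC ω).2) (fun ω => hC' _) hπb
      hZsm3 hmo1sm2 hpism2 hY1smB
      hmo (fun ω => by rcases hZ01 ω with h0 | h0 <;> rw [h0] <;> ring)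
      (fun ω => by rw [hYdef ω]; rcases hZ01 ω with h0 | h0 <;> rw [h0] <;> ring)
      hK2 (hA3.mono fun ω h3 => h3.1)
  have hπB' : (fun ω => 1 - pi (X ω, V ω)) =ᵐ[μ]
      μ[fun ω => 1 - Z ω | MeasurableSpace.comap
        (fun ω => ((X ω, V ω), (Y0 ω, Y1 ω))) inferInstance] := by
    have hs : μ[fun ω => 1 - Z ω | MeasurableSpace.comap
          (fun ω => ((X ω, V ω), (Y0 ω, Y1 ω))) inferInstance]
        =ᵐ[μ] μ[fun _ => (1:ℝ) | MeasurableSpace.comap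
          (fun ω => ((X ω, V ω), (Y0 ω, Y1 ω))) inferInstance]
          - μ[Z | MeasurableSpace.comap
            (fun ω => ((X ω, V ω), (Y0 ω, Y1 ω))) inferInstance] :=
      condExp_sub (integrable_const 1) hZint _
    rw [condExp_const hmB2] at hs
    filter_upwards [hs, hK2] with ω h1 h2
    have h1' : (μ[fun ω => 1 - Z ω | MeasurableSpace.comap
        (fun ω => ((X ω, V ω), (Y0 ω, Y1 ω))) inferInstance]) ω
        = 1 - (μ[Z | MeasurableSpace.comap
          (fun ω => ((X ω, V ω), (Y0 ω, Y1 ω))) inferInstance]) ω := by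
      simpa using h1
    have h2' : pi (X ω, V ω) = (μ[Z | MeasurableSpace.comap
        (fun ω => ((X ω, V ω), (Y0 ω, Y1 ω))) inferInstance]) ω := h2
    show 1 - pi (X ω, V ω) = _
    rw [h1', ← h2']
  have hIm0 : ∫ ω, mo (0, X ω, V ω) ∂μ = ∫ ω, Y0 ω ∂μ :=
    trAux_outcome (ζ := fun ω => 1 - Z ω) (Yv := Y) (Y' := Y0)
      (q := fun ω => mo (0, X ω, V ω)) (π2 := fun ω => 1 - pi (X ω, V ω))
      (w3 := fun ω => mo (Z ω, X ω, V ω))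
      hm23 hmZXV hmXV hm2B hmB2
      (measurable_const.sub hZ) hYm hY0 hmo0m
      (measurable_const.sub (hpiM.comp (hX.prodMk hV)))
      (fun ω => by
        show |1 - Z ω| ≤ 1
        rcases hZ01 ω with h0 | h0 <;> rw [h0] <;> norm_num)
      hYb (fun ω => (hC ω).1) (fun ω => hC' _)
      (by filter_upwards [hA3] with ω h3
          show |1 - pi (X ω, V ω)| ≤ 1
          exact abs_le.mpr ⟨by linarith [h3.2], by linarith [h3.1]⟩)
      (stronglyMeasurable_const.sub hZsm3) hmo0sm2 hpism2' hY0smB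
      hmo (fun ω => by
        show (1 - Z ω) * mo (Z ω, X ω, V ω) = mo (0, X ω, V ω) * (1 - Z ω)
        rcases hZ01 ω with h0 | h0 <;> rw [h0] <;> ring)
      (fun ω => by
        show (1 - Z ω) * Y ω = (1 - Z ω) * Y0 ω
        rw [hYdef ω]; rcases hZ01 ω with h0 | h0 <;> rw [h0] <;> ring)
      hπB' (hA3.mono fun ω h3 => by
        show (0:ℝ) < 1 - pi (X ω, V ω)
        linarith [h3.2])
  -- integrability of the three pieces
  have hAint : Integrable (fun ω => ua ω * (Y ω - mo (Z ω, X ω, V ω))) μ :=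
    (huaY.sub huamoZ).congr (ae_of_all _ fun ω => by simp only [Pi.sub_apply]; ring)
  have hBint : Integrable (fun ω => ub ω * (Y ω - mo (Z ω, X ω, V ω))) μ :=
    (hubY.sub hubmoZ).congr (ae_of_all _ fun ω => by simp only [Pi.sub_apply]; ring)
  have hCint : Integrable
      (fun ω => uc ω * (mo (1, X ω, V ω) - mo (0, X ω, V ω) - h (X ω))) μ :=
    (hucD.sub huchX).congr (ae_of_all _ fun ω => by simp only [Pi.sub_apply]; ring)
  -- final computation
  calc ∫ ω, (R ω / rhostar (X ω)) *
          ((Z ω / pistar (X ω, V ω)) * (Y ω - mo (1, X ω, V ω))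
            - ((1 - Z ω) / (1 - pistar (X ω, V ω))) * (Y ω - mo (0, X ω, V ω))
            + mo (1, X ω, V ω) - mo (0, X ω, V ω) - h (X ω))
        + h (X ω) ∂μ
      = ∫ ω, (Φ ω * R ω + h (X ω)) ∂μ := by
        refine integral_congr_ae (ae_of_all _ fun ω => ?_)
        rw [hPhidef]; ring
    _ = (∫ ω, Φ ω * R ω ∂μ) + ∫ ω, h (X ω) ∂μ := integral_add hPhiR hhXint
    _ = (∫ ω, Φ ω * rho (X ω) ∂μ) + ∫ ω, h (X ω) ∂μ := by
        rw [trAux_int_eq hmB1 hK1 hPhism hRint hPhiR]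
    _ = ((∫ ω, ua ω * (Y ω - mo (Z ω, X ω, V ω)) ∂μ)
          + (∫ ω, ub ω * (Y ω - mo (Z ω, X ω, V ω)) ∂μ)
          + (∫ ω, uc ω * (mo (1, X ω, V ω) - mo (0, X ω, V ω) - h (X ω)) ∂μ))
        + ∫ ω, h (X ω) ∂μ := by
        have e1 : ∫ ω, Φ ω * rho (X ω) ∂μ
            = ∫ ω, (ua ω * (Y ω - mo (Z ω, X ω, V ω))
                + ub ω * (Y ω - mo (Z ω, X ω, V ω))
                + uc ω * (mo (1, X ω, V ω) - mo (0, X ω, V ω) - h (X ω))) ∂μ := by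
          refine integral_congr_ae (ae_of_all _ fun ω => ?_)
          simp only [hPhidef, huadef, hubdef, hucdef]
          rcases hZ01 ω with h0 | h0 <;> rw [h0] <;> ring
        have e2 : ∫ ω, (ua ω * (Y ω - mo (Z ω, X ω, V ω))
                + ub ω * (Y ω - mo (Z ω, X ω, V ω))
                + uc ω * (mo (1, X ω, V ω) - mo (0, X ω, V ω) - h (X ω))) ∂μ
            = (∫ ω, (ua ω * (Y ω - mo (Z ω, X ω, V ω))
                + ub ω * (Y ω - mo (Z ω, X ω, V ω))) ∂μ)
              + ∫ ω, uc ω * (mo (1, X ω, V ω) - mo (0, X ω, V ω) - h (X ω)) ∂μ :=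
          integral_add (hAint.add hBint) hCint
        have e3 : ∫ ω, (ua ω * (Y ω - mo (Z ω, X ω, V ω))
                + ub ω * (Y ω - mo (Z ω, X ω, V ω))) ∂μ
            = (∫ ω, ua ω * (Y ω - mo (Z ω, X ω, V ω)) ∂μ)
              + ∫ ω, ub ω * (Y ω - mo (Z ω, X ω, V ω)) ∂μ :=
          integral_add hAint hBint
        rw [e1, e2, e3]
    _ = (0 + 0 + 0) + ∫ ω, h (X ω) ∂μ := by rw [hIa, hIb, hIc]
    _ = ∫ ω, h (X ω) ∂μ := by ring
    _ = ∫ ω, (mo (1, X ω, V ω) - mo (0, X ω, V ω)) ∂μ := by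
        rw [integral_congr_ae hh, integral_condExp hmX]
    _ = (∫ ω, mo (1, X ω, V ω) ∂μ) - ∫ ω, mo (0, X ω, V ω) ∂μ :=
        integral_sub hmo1int hmo0int
    _ = (∫ ω, Y1 ω ∂μ) - ∫ ω, Y0 ω ∂μ := by rw [hIm1, hIm0]
    _ = ∫ ω, (Y1 ω - Y0 ω) ∂μ := (integral_sub hY1int hY0int).symm
end

section
/- (Proposition 2(a), identification of the causal risk ratio via selection probability and propensity score) Under Assumptions (A1)–(A4) and E[Y0] ≠ 0, one has E[(R/ρ(X))·((1−Z)/(1−π(X,V)))·Y] ≠ 0 and ξ = E[(R/ρ(X))·(Z/π(X,V))·Y] / E[(R/ρ(X))·((1−Z)/(1−π(X,V)))·Y]. -/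
open MeasureTheory ProbabilityTheory

open MeasurableSpace Set
open scoped ENNReal

lemma crr_key_lintegral {Ω γ : Type*} (m' : MeasurableSpace Ω) {mγ : MeasurableSpace γ}
    [mΩ : MeasurableSpace Ω] [StandardBorelSpace Ω]
    (μ : Measure Ω) [IsProbabilityMeasure μ]
    (hm' : m' ≤ mΩ)
    {R : Ω → ℝ} (hRm : Measurable[mΩ] R) (hR01 : ∀ ω, R ω = 0 ∨ R ω = 1)
    {g : Ω → γ} (hg : Measurable[mΩ] g)
    (hci : CondIndepFun m' hm' R g μ)
    {ρ' : Ω → ℝ} (hρ'm : Measurable[m'] ρ') (hρ' : ρ' =ᵐ[μ] μ[R|m'])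
    {k : Ω → ℝ≥0∞} (hk : Measurable[m' ⊔ MeasurableSpace.comap g mγ] k) :
    ∫⁻ ω, ENNReal.ofReal (R ω) * k ω ∂μ = ∫⁻ ω, ENNReal.ofReal (ρ' ω) * k ω ∂μ := by
  have hmg : MeasurableSpace.comap g mγ ≤ mΩ := measurable_iff_comap_le.mp hg
  have hm'' : m' ⊔ MeasurableSpace.comap g mγ ≤ mΩ := sup_le hm' hmg
  have hR0 : ∀ ω, 0 ≤ R ω := fun ω => by rcases hR01 ω with h | h <;> rw [h] <;> norm_num
  have hRle : ∀ ω, R ω ≤ 1 := fun ω => by rcases hR01 ω with h | h <;> rw [h] <;> norm_num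
  have hRint : Integrable R μ :=
    Integrable.mono' (integrable_const (1 : ℝ)) hRm.aestronglyMeasurable
      (Filter.Eventually.of_forall fun ω => by
        rw [Real.norm_of_nonneg (hR0 ω)]; exact hRle ω)
  have hρ'int : Integrable ρ' μ := integrable_condExp.congr hρ'.symm
  have hρ'0 : 0 ≤ᵐ[μ] ρ' := by
    filter_upwards [hρ', condExp_nonneg (μ := μ) (m := m')
      (Filter.Eventually.of_forall hR0)] with ω h1 h2
    rw [h1]; exact h2
  -- R as indicator
  have hAmeas : MeasurableSet[mΩ] (R ⁻¹' {1}) := hRm (measurableSet_singleton 1)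
  have hRind : R = (R ⁻¹' {1}).indicator (fun _ => (1 : ℝ)) := by
    funext ω
    rcases hR01 ω with h | h
    · have : ω ∉ R ⁻¹' {1} := by simp [h]
      simp [this, h]
    · have : ω ∈ R ⁻¹' {1} := by simp [h]
      simp [this, h]
  have hprod := (condIndepFun_iff_condExp_inter_preimage_eq_mul (μ := μ)
    (hm' := hm') hRm hg).mp hci
  -- the pi-system
  have hSpi : IsPiSystem {u : Set Ω | ∃ s t, MeasurableSet[m'] s ∧
      MeasurableSet[MeasurableSpace.comap g mγ] t ∧ u = s ∩ t} := by
    rintro u ⟨s1, t1, hs1, ht1, rfl⟩ v ⟨s2, t2, hs2, ht2, rfl⟩ -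
    exact ⟨s1 ∩ s2, t1 ∩ t2, hs1.inter hs2, ht1.inter ht2, by
      rw [Set.inter_inter_inter_comm]⟩
  have hle1 : ∀ s, MeasurableSet[m'] s → MeasurableSet[m' ⊔ MeasurableSpace.comap g mγ] s :=
    fun s hs => (le_sup_left : m' ≤ m' ⊔ MeasurableSpace.comap g mγ) s hs
  have hle2 : ∀ s, MeasurableSet[MeasurableSpace.comap g mγ] s →
      MeasurableSet[m' ⊔ MeasurableSpace.comap g mγ] s :=
    fun s hs => (le_sup_right : MeasurableSpace.comap g mγ ≤ m' ⊔ MeasurableSpace.comap g mγ) s hs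
  have hgen : m' ⊔ MeasurableSpace.comap g mγ = MeasurableSpace.generateFrom
      {u : Set Ω | ∃ s t, MeasurableSet[m'] s ∧
        MeasurableSet[MeasurableSpace.comap g mγ] t ∧ u = s ∩ t} := by
    refine le_antisymm (sup_le ?_ ?_) (MeasurableSpace.generateFrom_le ?_)
    · intro s hs
      exact MeasurableSpace.measurableSet_generateFrom
        ⟨s, Set.univ, hs, MeasurableSet.univ, (Set.inter_univ s).symm⟩
    · intro t ht
      exact MeasurableSpace.measurableSet_generateFrom
        ⟨Set.univ, t, MeasurableSet.univ, ht, (Set.univ_inter t).symm⟩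
    · rintro u ⟨s, t, hs, ht, rfl⟩
      exact MeasurableSet.inter (hle1 s hs) (hle2 t ht)
  -- the core real identity on the pi-system
  have core : ∀ s t, MeasurableSet[m'] s → MeasurableSet[MeasurableSpace.comap g mγ] t →
      ∫ ω in s ∩ t, R ω ∂μ = ∫ ω in s ∩ t, ρ' ω ∂μ := by
    rintro s t hs ⟨B, hB, rfl⟩
    have ht : MeasurableSet[mΩ] (g ⁻¹' B) := hg hB
    have hsΩ : MeasurableSet[mΩ] s := hm' s hs
    have hindint : Integrable ((g ⁻¹' B ∩ R ⁻¹' {1}).indicator fun _ => (1 : ℝ)) μ :=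
      (integrable_const (1 : ℝ)).indicator (ht.inter hAmeas)
    have htind : Integrable ((g ⁻¹' B).indicator fun _ => (1 : ℝ)) μ :=
      (integrable_const (1 : ℝ)).indicator ht
    have hρtint : Integrable (ρ' * (g ⁻¹' B).indicator fun _ => (1 : ℝ)) μ := by
      have heq : (ρ' * (g ⁻¹' B).indicator fun _ => (1 : ℝ)) = (g ⁻¹' B).indicator ρ' := by
        funext ω
        by_cases h : ω ∈ g ⁻¹' B <;> simp [Set.indicator, h]
      rw [heq]
      exact hρ'int.indicator ht
    -- LHS
    have hL : ∫ ω in s ∩ g ⁻¹' B, R ω ∂μ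
        = ∫ ω in s, (μ[(g ⁻¹' B ∩ R ⁻¹' {1}).indicator (fun _ => (1:ℝ)) | m']) ω ∂μ := by
      rw [setIntegral_condExp hm' hindint hs, ← setIntegral_indicator ht]
      congr 1
      funext ω
      by_cases hω : ω ∈ g ⁻¹' B
      · rcases hR01 ω with h | h
        · have : ω ∉ R ⁻¹' {1} := by simp [h]
          simp [Set.indicator, hω, this, h]
        · have : ω ∈ R ⁻¹' {1} := by simp [h]
          simp [Set.indicator, hω, this, h]
      · simp [Set.indicator, hω]
    -- RHS
    have hRht : ∫ ω in s ∩ g ⁻¹' B, ρ' ω ∂μ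
        = ∫ ω in s, (μ[ρ' * (g ⁻¹' B).indicator (fun _ => (1:ℝ)) | m']) ω ∂μ := by
      rw [setIntegral_condExp hm' hρtint hs, ← setIntegral_indicator ht]
      congr 1
      funext ω
      by_cases h : ω ∈ g ⁻¹' B <;> simp [Set.indicator, h]
    rw [hL, hRht]
    refine setIntegral_congr_ae hsΩ ?_
    have h1 : μ[(g ⁻¹' B ∩ R ⁻¹' {1}).indicator (fun _ => (1:ℝ)) | m']
        =ᵐ[μ] fun ω => (μ[(R ⁻¹' {1}).indicator (fun _ => (1:ℝ)) | m']) ω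
          * (μ[(g ⁻¹' B).indicator (fun _ => (1:ℝ)) | m']) ω := by
      have h := hprod {1} B (measurableSet_singleton 1) hB
      have heq : R ⁻¹' {1} ∩ g ⁻¹' B = g ⁻¹' B ∩ R ⁻¹' {1} := Set.inter_comm _ _
      rw [heq] at h
      exact h
    have h2 : μ[ρ' * (g ⁻¹' B).indicator (fun _ => (1:ℝ)) | m']
        =ᵐ[μ] ρ' * μ[(g ⁻¹' B).indicator (fun _ => (1:ℝ)) | m'] :=
      condExp_mul_of_stronglyMeasurable_left hρ'm.stronglyMeasurable hρtint htind
    have hcR : μ[R|m'] = μ[(R ⁻¹' {1}).indicator (fun _ => (1:ℝ))|m'] := by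
      conv_lhs => rw [hRind]
    filter_upwards [h1, h2, hρ'] with ω e1 e2 e3
    intro _
    rw [e1, e2]
    simp only [Pi.mul_apply]
    rw [e3, hcR]
  -- lift to withDensity measures
  have hRofm : Measurable (fun ω => ENNReal.ofReal (R ω)) := hRm.ennreal_ofReal
  have hρofm : Measurable (fun ω => ENNReal.ofReal (ρ' ω)) :=
    ((hρ'm.mono hm' le_rfl)).ennreal_ofReal
  have hfin1 : IsFiniteMeasure (μ.withDensity (fun ω => ENNReal.ofReal (R ω))) := by
    refine isFiniteMeasure_withDensity ?_
    have hle : ∫⁻ ω, ENNReal.ofReal (R ω) ∂μ ≤ ∫⁻ _, (1:ℝ≥0∞) ∂μ :=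
      lintegral_mono fun ω => by simpa using ENNReal.ofReal_le_ofReal (hRle ω)
    refine ne_of_lt (lt_of_le_of_lt hle ?_)
    simp
  have hfin2 : IsFiniteMeasure (μ.withDensity (fun ω => ENNReal.ofReal (ρ' ω))) := by
    refine isFiniteMeasure_withDensity ?_
    exact ((hasFiniteIntegral_iff_ofReal hρ'0).mp hρ'int.2).ne
  haveI := hfin1; haveI := hfin2
  -- measures agree on the pi-system
  have hagree : ∀ u, MeasurableSet[mΩ] u → (∫ ω in u, R ω ∂μ = ∫ ω in u, ρ' ω ∂μ) →
      μ.withDensity (fun ω => ENNReal.ofReal (R ω)) u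
        = μ.withDensity (fun ω => ENNReal.ofReal (ρ' ω)) u := by
    intro u hu hint
    rw [withDensity_apply _ hu, withDensity_apply _ hu]
    rw [← ofReal_integral_eq_lintegral_ofReal hRint.restrict
      (Filter.Eventually.of_forall hR0),
      ← ofReal_integral_eq_lintegral_ofReal hρ'int.restrict (ae_restrict_of_ae hρ'0), hint]
  have htrim : (μ.withDensity (fun ω => ENNReal.ofReal (R ω))).trim hm''
      = (μ.withDensity (fun ω => ENNReal.ofReal (ρ' ω))).trim hm'' := by
    refine ext_of_generate_finite _ hgen hSpi ?_ ?_
    · rintro u ⟨s, t, hs, ht, rfl⟩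
      have hu'' : MeasurableSet[m' ⊔ MeasurableSpace.comap g mγ] (s ∩ t) :=
        (hle1 s hs).inter (hle2 t ht)
      rw [trim_measurableSet_eq hm'' hu'', trim_measurableSet_eq hm'' hu'']
      exact hagree _ (hm'' _ hu'') (core s t hs ht)
    · have huniv : MeasurableSet[m' ⊔ MeasurableSpace.comap g mγ] (Set.univ : Set Ω) :=
        MeasurableSet.univ
      rw [trim_measurableSet_eq hm'' huniv, trim_measurableSet_eq hm'' huniv]
      refine hagree _ MeasurableSet.univ ?_
      rw [Measure.restrict_univ]
      calc ∫ ω, R ω ∂μ = ∫ ω, (μ[R|m']) ω ∂μ := (integral_condExp hm').symm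
        _ = ∫ ω, ρ' ω ∂μ := integral_congr_ae hρ'.symm
  calc ∫⁻ ω, ENNReal.ofReal (R ω) * k ω ∂μ
      = ∫⁻ ω, k ω ∂(μ.withDensity (fun ω => ENNReal.ofReal (R ω))) :=
        (lintegral_withDensity_eq_lintegral_mul μ hRofm (hk.mono hm'' le_rfl)).symm
    _ = ∫⁻ ω, k ω ∂((μ.withDensity (fun ω => ENNReal.ofReal (R ω))).trim hm'') :=
        (lintegral_trim hm'' hk).symm
    _ = ∫⁻ ω, k ω ∂((μ.withDensity (fun ω => ENNReal.ofReal (ρ' ω))).trim hm'') := by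
        rw [htrim]
    _ = ∫⁻ ω, k ω ∂(μ.withDensity (fun ω => ENNReal.ofReal (ρ' ω))) :=
        lintegral_trim hm'' hk
    _ = ∫⁻ ω, ENNReal.ofReal (ρ' ω) * k ω ∂μ :=
        lintegral_withDensity_eq_lintegral_mul μ hρofm (hk.mono hm'' le_rfl)

lemma crr_chain {Ω 𝒳 𝒱 : Type*} [mΩ : MeasurableSpace Ω] [StandardBorelSpace Ω]
    [MeasurableSpace 𝒳] [MeasurableSpace 𝒱]
    (μ : Measure Ω) [IsProbabilityMeasure μ]
    (X : Ω → 𝒳) (V : Ω → 𝒱) (Z R Y Y0 Y1 : Ω → ℝ)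
    (hX : Measurable X) (hV : Measurable V) (hZ : Measurable Z) (hRm : Measurable R)
    (hYm : Measurable Y) (hY0 : Measurable Y0) (hY1 : Measurable Y1)
    (hR01 : ∀ ω, R ω = 0 ∨ R ω = 1)
    (rho : 𝒳 → ℝ) (hrhoM : Measurable rho)
    (hrho : (fun ω => rho (X ω)) =ᵐ[μ] μ[R | MeasurableSpace.comap X inferInstance])
    (hA1 : CondIndepFun (MeasurableSpace.comap X inferInstance)
      (measurable_iff_comap_le.mp hX) R (fun ω => (Y ω, Z ω, V ω)) μ)
    (hA4 : ∀ᵐ ω ∂μ, 0 < rho (X ω))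
    (W : Ω → ℝ) (p : 𝒳 × 𝒱 → ℝ) (f fy : Ω → ℝ)
    (hWm : Measurable W) (hW01 : ∀ ω, W ω = 0 ∨ W ω = 1)
    (hpm : Measurable p)
    (hpcond : (fun ω => p (X ω, V ω)) =ᵐ[μ]
      μ[W | MeasurableSpace.comap (fun ω => (X ω, V ω)) inferInstance])
    (hppos : ∀ᵐ ω ∂μ, 0 < p (X ω, V ω))
    (hWci : CondIndepFun (MeasurableSpace.comap (fun ω => (X ω, V ω)) inferInstance)
      (measurable_iff_comap_le.mp (hX.prodMk hV)) W (fun ω => (Y0 ω, Y1 ω)) μ)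
    (hfm : Measurable f) (hf0 : ∀ ω, 0 ≤ f ω)
    (hWmy : Measurable[MeasurableSpace.comap (fun ω => (Y ω, Z ω, V ω)) inferInstance] W)
    (hfym : Measurable[MeasurableSpace.comap (fun ω => (Y ω, Z ω, V ω)) inferInstance] fy)
    (hfm2 : Measurable[MeasurableSpace.comap (fun ω => (Y0 ω, Y1 ω)) inferInstance] f)
    (hWfy : ∀ ω, W ω * fy ω = W ω * f ω) :
    ∫⁻ ω, ENNReal.ofReal (R ω * W ω * f ω / (rho (X ω) * p (X ω, V ω))) ∂μ
      = ∫⁻ ω, ENNReal.ofReal (f ω) ∂μ := by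
  have hR0 : ∀ ω, 0 ≤ R ω := fun ω => by rcases hR01 ω with h | h <;> rw [h] <;> norm_num
  have hW0 : ∀ ω, 0 ≤ W ω := fun ω => by rcases hW01 ω with h | h <;> rw [h] <;> norm_num
  have htriple : Measurable (fun ω => (Y ω, Z ω, V ω)) := hYm.prodMk (hZ.prodMk hV)
  have hpair : Measurable (fun ω => (Y0 ω, Y1 ω)) := hY0.prodMk hY1
  have hρ'm : Measurable[MeasurableSpace.comap X inferInstance] (fun ω => rho (X ω)) :=
    hrhoM.comp (measurable_iff_comap_le.mpr le_rfl)
  -- measurability for stage 1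
  have htr : Measurable[MeasurableSpace.comap (fun ω => (Y ω, Z ω, V ω)) inferInstance]
      (fun ω => (Y ω, Z ω, V ω)) := measurable_iff_comap_le.mpr le_rfl
  have hVc : Measurable[MeasurableSpace.comap (fun ω => (Y ω, Z ω, V ω)) inferInstance] V :=
    (measurable_snd.comp measurable_snd).comp htr
  have hXc : Measurable[MeasurableSpace.comap X inferInstance] X :=
    measurable_iff_comap_le.mpr le_rfl
  have hXs : Measurable[MeasurableSpace.comap X inferInstance
      ⊔ MeasurableSpace.comap (fun ω => (Y ω, Z ω, V ω)) inferInstance] X :=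
    hXc.mono le_sup_left le_rfl
  have hVs : Measurable[MeasurableSpace.comap X inferInstance
      ⊔ MeasurableSpace.comap (fun ω => (Y ω, Z ω, V ω)) inferInstance] V :=
    hVc.mono le_sup_right le_rfl
  have hk1 : Measurable[MeasurableSpace.comap X inferInstance
      ⊔ MeasurableSpace.comap (fun ω => (Y ω, Z ω, V ω)) inferInstance]
      (fun ω => ENNReal.ofReal (W ω * fy ω / (rho (X ω) * p (X ω, V ω)))) := by
    refine Measurable.ennreal_ofReal (Measurable.div (Measurable.mul ?_ ?_)
      (Measurable.mul ?_ ?_))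
    · exact hWmy.mono le_sup_right le_rfl
    · exact hfym.mono le_sup_right le_rfl
    · exact hrhoM.comp hXs
    · exact hpm.comp (hXs.prodMk hVs)
  have e1 : ∀ᵐ ω ∂μ, ENNReal.ofReal (R ω * W ω * f ω / (rho (X ω) * p (X ω, V ω)))
      = ENNReal.ofReal (R ω) * ENNReal.ofReal (W ω * fy ω / (rho (X ω) * p (X ω, V ω))) := by
    filter_upwards [hA4, hppos] with ω h4 hp
    rw [← ENNReal.ofReal_mul (hR0 ω)]
    congr 1
    rw [hWfy ω]
    ring
  rw [lintegral_congr_ae e1,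
    crr_key_lintegral _ μ (measurable_iff_comap_le.mp hX) hRm hR01 htriple hA1 hρ'm hrho hk1]
  have e2 : ∀ᵐ ω ∂μ, ENNReal.ofReal (rho (X ω))
        * ENNReal.ofReal (W ω * fy ω / (rho (X ω) * p (X ω, V ω)))
      = ENNReal.ofReal (W ω) * ENNReal.ofReal (f ω / p (X ω, V ω)) := by
    filter_upwards [hA4, hppos] with ω h4 hp
    rw [← ENNReal.ofReal_mul h4.le, ← ENNReal.ofReal_mul (hW0 ω)]
    congr 1
    rw [hWfy ω]
    field_simp
  rw [lintegral_congr_ae e2]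
  have hp'm : Measurable[MeasurableSpace.comap (fun ω => (X ω, V ω)) inferInstance]
      (fun ω => p (X ω, V ω)) := hpm.comp (measurable_iff_comap_le.mpr le_rfl)
  have hk2 : Measurable[MeasurableSpace.comap (fun ω => (X ω, V ω)) inferInstance
      ⊔ MeasurableSpace.comap (fun ω => (Y0 ω, Y1 ω)) inferInstance]
      (fun ω => ENNReal.ofReal (f ω / p (X ω, V ω))) := by
    refine Measurable.ennreal_ofReal (Measurable.div ?_ ?_)
    · exact hfm2.mono le_sup_right le_rfl
    · exact hp'm.mono le_sup_left le_rfl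
  rw [crr_key_lintegral _ μ (measurable_iff_comap_le.mp (hX.prodMk hV)) hWm hW01 hpair
    hWci hp'm hpcond hk2]
  have e3 : ∀ᵐ ω ∂μ, ENNReal.ofReal (p (X ω, V ω)) * ENNReal.ofReal (f ω / p (X ω, V ω))
      = ENNReal.ofReal (f ω) := by
    filter_upwards [hppos] with ω hp
    rw [← ENNReal.ofReal_mul hp.le]
    congr 1
    field_simp
  rw [lintegral_congr_ae e3]

set_option maxHeartbeats 1600000 in
theorem crr_identification_ipw
    {Ω 𝒳 𝒱 : Type*}
    [MeasurableSpace Ω] [StandardBorelSpace Ω] [Nonempty Ω]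
    [MeasurableSpace 𝒳] [StandardBorelSpace 𝒳]
    [MeasurableSpace 𝒱] [StandardBorelSpace 𝒱]
    (μ : Measure Ω) [IsProbabilityMeasure μ]
    (X : Ω → 𝒳) (V : Ω → 𝒱) (Z R Y0 Y1 : Ω → ℝ)
    (hX : Measurable X) (hV : Measurable V) (hZ : Measurable Z)
    (hR : Measurable R) (hY0 : Measurable Y0) (hY1 : Measurable Y1)
    (hZ01 : ∀ ω, Z ω = 0 ∨ Z ω = 1) (hR01 : ∀ ω, R ω = 0 ∨ R ω = 1)
    (hYbd : ∃ C, ∀ ω, |Y0 ω| ≤ C ∧ |Y1 ω| ≤ C)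
    (Y : Ω → ℝ) (hYdef : ∀ ω, Y ω = Z ω * Y1 ω + (1 - Z ω) * Y0 ω)
    (pi : 𝒳 × 𝒱 → ℝ) (rho : 𝒳 → ℝ)
    (hpiM : Measurable pi) (hrhoM : Measurable rho)
    (hpi : (fun ω => pi (X ω, V ω)) =ᵐ[μ]
      μ[Z | MeasurableSpace.comap (fun ω => (X ω, V ω)) inferInstance])
    (hrho : (fun ω => rho (X ω)) =ᵐ[μ]
      μ[R | MeasurableSpace.comap X inferInstance])
    (hA1 : CondIndepFun (MeasurableSpace.comap X inferInstance)
      (measurable_iff_comap_le.mp hX) R (fun ω => (Y ω, Z ω, V ω)) μ)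
    (hA2 : CondIndepFun (MeasurableSpace.comap (fun ω => (X ω, V ω)) inferInstance)
      (measurable_iff_comap_le.mp (hX.prodMk hV)) Z (fun ω => (Y0 ω, Y1 ω)) μ)
    (hA3 : ∀ᵐ ω ∂μ, 0 < pi (X ω, V ω) ∧ pi (X ω, V ω) < 1)
    (hA4 : ∀ᵐ ω ∂μ, 0 < rho (X ω))
    (hY0ne : ∫ ω, Y0 ω ∂μ ≠ 0) :
    (∫ ω, (R ω / rho (X ω)) * ((1 - Z ω) / (1 - pi (X ω, V ω))) * Y ω ∂μ ≠ 0) ∧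
    (∫ ω, Y1 ω ∂μ) / (∫ ω, Y0 ω ∂μ)
      = (∫ ω, (R ω / rho (X ω)) * (Z ω / pi (X ω, V ω)) * Y ω ∂μ)
        / ∫ ω, (R ω / rho (X ω)) * ((1 - Z ω) / (1 - pi (X ω, V ω))) * Y ω ∂μ := by
  obtain ⟨C, hC⟩ := hYbd
  have hC0 : 0 ≤ C := le_trans (abs_nonneg _) (hC (Classical.arbitrary Ω)).1
  have hR0 : ∀ ω, 0 ≤ R ω := fun ω => by rcases hR01 ω with h | h <;> rw [h] <;> norm_num
  have hZ0 : ∀ ω, 0 ≤ Z ω := fun ω => by rcases hZ01 ω with h | h <;> rw [h] <;> norm_num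
  have hYm : Measurable Y := by
    have : Y = fun ω => Z ω * Y1 ω + (1 - Z ω) * Y0 ω := funext hYdef
    rw [this]
    exact (hZ.mul hY1).add ((measurable_const.sub hZ).mul hY0)
  have hY1eqZ : ∀ ω, Z ω = 1 → Y ω = Y1 ω := fun ω h => by rw [hYdef ω, h]; ring
  have hY0eqZ : ∀ ω, Z ω = 0 → Y ω = Y0 ω := fun ω h => by rw [hYdef ω, h]; ring
  -- measurability helpers for sub-σ-algebras
  have htrc : Measurable[MeasurableSpace.comap (fun ω => (Y ω, Z ω, V ω)) inferInstance]
      (fun ω => (Y ω, Z ω, V ω)) := measurable_iff_comap_le.mpr le_rfl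
  have hpc : Measurable[MeasurableSpace.comap (fun ω => (Y0 ω, Y1 ω)) inferInstance]
      (fun ω => (Y0 ω, Y1 ω)) := measurable_iff_comap_le.mpr le_rfl
  have hZc : Measurable[MeasurableSpace.comap (fun ω => (Y ω, Z ω, V ω)) inferInstance] Z :=
    (measurable_fst.comp measurable_snd).comp htrc
  have hYc : Measurable[MeasurableSpace.comap (fun ω => (Y ω, Z ω, V ω)) inferInstance] Y :=
    measurable_fst.comp htrc
  have hY0c : Measurable[MeasurableSpace.comap (fun ω => (Y0 ω, Y1 ω)) inferInstance] Y0 :=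
    measurable_fst.comp hpc
  have hY1c : Measurable[MeasurableSpace.comap (fun ω => (Y0 ω, Y1 ω)) inferInstance] Y1 :=
    measurable_snd.comp hpc
  -- denominator inputs
  have hZint : Integrable Z μ :=
    Integrable.mono' (integrable_const (1 : ℝ)) hZ.aestronglyMeasurable
      (Filter.Eventually.of_forall fun ω => by
        rcases hZ01 ω with h | h <;> rw [h] <;> norm_num)
  have hW01d : ∀ ω, (1 - Z ω) = 0 ∨ (1 - Z ω) = 1 := fun ω => by
    rcases hZ01 ω with h | h <;> rw [h] <;> norm_num
  have hpden : (fun ω => 1 - pi (X ω, V ω)) =ᵐ[μ]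
      μ[(fun ω => 1 - Z ω) | MeasurableSpace.comap (fun ω => (X ω, V ω)) inferInstance] := by
    have h2 : μ[(fun ω => 1 - Z ω) | MeasurableSpace.comap (fun ω => (X ω, V ω)) inferInstance]
        =ᵐ[μ] (fun _ => (1:ℝ))
          - μ[Z | MeasurableSpace.comap (fun ω => (X ω, V ω)) inferInstance] := by
      have h := condExp_sub (μ := μ)
        (m := MeasurableSpace.comap (fun ω => (X ω, V ω)) inferInstance)
        (integrable_const (1:ℝ)) hZint
      rw [condExp_const (measurable_iff_comap_le.mp (hX.prodMk hV)) (1:ℝ)] at h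
      exact h
    filter_upwards [h2, hpi] with ω e2 e1
    rw [e2]
    simp only [Pi.sub_apply]
    rw [← e1]
  have hpposd : ∀ᵐ ω ∂μ, 0 < 1 - pi (X ω, V ω) := by
    filter_upwards [hA3] with ω h; linarith [h.2]
  have hWcid : CondIndepFun (MeasurableSpace.comap (fun ω => (X ω, V ω)) inferInstance)
      (measurable_iff_comap_le.mp (hX.prodMk hV)) (fun ω => 1 - Z ω)
      (fun ω => (Y0 ω, Y1 ω)) μ :=
    hA2.comp (measurable_const.sub measurable_id) measurable_id
  -- the four chain identities
  have hNp := crr_chain μ X V Z R Y Y0 Y1 hX hV hZ hR hYm hY0 hY1 hR01 rho hrhoM hrho hA1 hA4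
    Z pi (fun ω => max (Y1 ω) 0) (fun ω => max (Y ω) 0)
    hZ hZ01 hpiM hpi (hA3.mono fun ω h => h.1) hA2
    (hY1.max measurable_const) (fun ω => le_max_right _ _)
    hZc (hYc.max measurable_const) (hY1c.max measurable_const)
    (fun ω => by
      rcases hZ01 ω with h | h
      · simp [h]
      · simp [h, hY1eqZ ω h])
  have hNm := crr_chain μ X V Z R Y Y0 Y1 hX hV hZ hR hYm hY0 hY1 hR01 rho hrhoM hrho hA1 hA4
    Z pi (fun ω => max (-Y1 ω) 0) (fun ω => max (-Y ω) 0)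
    hZ hZ01 hpiM hpi (hA3.mono fun ω h => h.1) hA2
    (hY1.neg.max measurable_const) (fun ω => le_max_right _ _)
    hZc (hYc.neg.max measurable_const) (hY1c.neg.max measurable_const)
    (fun ω => by
      rcases hZ01 ω with h | h
      · simp [h]
      · simp [h, hY1eqZ ω h])
  have hDp := crr_chain μ X V Z R Y Y0 Y1 hX hV hZ hR hYm hY0 hY1 hR01 rho hrhoM hrho hA1 hA4
    (fun ω => 1 - Z ω) (fun q => 1 - pi q) (fun ω => max (Y0 ω) 0) (fun ω => max (Y ω) 0)
    (measurable_const.sub hZ) hW01d (measurable_const.sub hpiM) hpden hpposd hWcid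
    (hY0.max measurable_const) (fun ω => le_max_right _ _)
    (measurable_const.sub hZc) (hYc.max measurable_const) (hY0c.max measurable_const)
    (fun ω => by
      rcases hZ01 ω with h | h
      · simp [h, hY0eqZ ω h]
      · simp [h])
  have hDm := crr_chain μ X V Z R Y Y0 Y1 hX hV hZ hR hYm hY0 hY1 hR01 rho hrhoM hrho hA1 hA4
    (fun ω => 1 - Z ω) (fun q => 1 - pi q) (fun ω => max (-Y0 ω) 0) (fun ω => max (-Y ω) 0)
    (measurable_const.sub hZ) hW01d (measurable_const.sub hpiM) hpden hpposd hWcid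
    (hY0.neg.max measurable_const) (fun ω => le_max_right _ _)
    (measurable_const.sub hZc) (hYc.neg.max measurable_const) (hY0c.neg.max measurable_const)
    (fun ω => by
      rcases hZ01 ω with h | h
      · simp [h, hY0eqZ ω h]
      · simp [h])
  -- conversion to Bochner integrals
  have conv : ∀ (g f : Ω → ℝ), Measurable g → (∀ᵐ ω ∂μ, 0 ≤ g ω) → Measurable f →
      (∀ ω, 0 ≤ f ω) → (∀ ω, f ω ≤ C) →
      (∫⁻ ω, ENNReal.ofReal (g ω) ∂μ = ∫⁻ ω, ENNReal.ofReal (f ω) ∂μ) →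
      Integrable g μ ∧ ∫ ω, g ω ∂μ = ∫ ω, f ω ∂μ := by
    intro g f hgm hg0 hfm hf0 hfC hEq
    have hfin : ∫⁻ ω, ENNReal.ofReal (f ω) ∂μ < ⊤ := by
      have hle : ∫⁻ ω, ENNReal.ofReal (f ω) ∂μ ≤ ∫⁻ _, ENNReal.ofReal C ∂μ :=
        lintegral_mono fun ω => ENNReal.ofReal_le_ofReal (hfC ω)
      refine lt_of_le_of_lt hle ?_
      rw [lintegral_const]
      exact ENNReal.mul_lt_top ENNReal.ofReal_lt_top (measure_lt_top μ _)
    have hgfin : ∫⁻ ω, ENNReal.ofReal (g ω) ∂μ < ⊤ := by rw [hEq]; exact hfin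
    have hgint : Integrable g μ := by
      refine ⟨hgm.aestronglyMeasurable, ?_⟩
      rw [hasFiniteIntegral_iff_ofReal hg0]
      exact hgfin
    refine ⟨hgint, ?_⟩
    rw [integral_eq_lintegral_of_nonneg_ae hg0 hgm.aestronglyMeasurable,
      integral_eq_lintegral_of_nonneg_ae (Filter.Eventually.of_forall hf0)
        hfm.aestronglyMeasurable, hEq]
  have habsle : ∀ a, |a| ≤ C → max a 0 ≤ C := fun a h => max_le (abs_le.mp h).2 hC0
  have hmaxsub : ∀ a : ℝ, max a 0 - max (-a) 0 = a := fun a => by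
    rcases le_total a 0 with h | h
    · rw [max_eq_right h, max_eq_left (by linarith : (0:ℝ) ≤ -a)]; ring
    · rw [max_eq_left h, max_eq_right (by linarith : -a ≤ (0:ℝ))]; ring
  -- nonnegativity of the four integrands
  have hnn : ∀ (W f : Ω → ℝ), (∀ ω, 0 ≤ W ω) → (∀ ω, 0 ≤ f ω) → (p : 𝒳 × 𝒱 → ℝ) →
      (∀ᵐ ω ∂μ, 0 < p (X ω, V ω)) →
      ∀ᵐ ω ∂μ, 0 ≤ R ω * W ω * f ω / (rho (X ω) * p (X ω, V ω)) := by
    intro W f hW0 hf0 p hpp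
    filter_upwards [hA4, hpp] with ω h4 hp
    exact div_nonneg (mul_nonneg (mul_nonneg (hR0 ω) (hW0 ω)) (hf0 ω))
      (mul_nonneg h4.le hp.le)
  have hW0d : ∀ ω, 0 ≤ 1 - Z ω := fun ω => by
    rcases hZ01 ω with h | h <;> rw [h] <;> norm_num
  have hmg : ∀ (W : Ω → ℝ), Measurable W → ∀ (f : Ω → ℝ), Measurable f →
      ∀ (p : 𝒳 × 𝒱 → ℝ), Measurable p →
      Measurable (fun ω => R ω * W ω * f ω / (rho (X ω) * p (X ω, V ω))) := by
    intro W hW f hf p hp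
    exact ((hR.mul hW).mul hf).div ((hrhoM.comp hX).mul (hp.comp (hX.prodMk hV)))
  obtain ⟨hINp, hENp⟩ := conv _ _ (hmg Z hZ _ (hY1.max measurable_const) pi hpiM)
    (hnn Z _ hZ0 (fun ω => le_max_right _ _) pi (hA3.mono fun ω h => h.1))
    (hY1.max measurable_const) (fun ω => le_max_right _ _)
    (fun ω => habsle _ (hC ω).2) hNp
  obtain ⟨hINm, hENm⟩ := conv _ _ (hmg Z hZ _ (hY1.neg.max measurable_const) pi hpiM)
    (hnn Z _ hZ0 (fun ω => le_max_right _ _) pi (hA3.mono fun ω h => h.1))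
    (hY1.neg.max measurable_const) (fun ω => le_max_right _ _)
    (fun ω => habsle _ (by rw [Pi.neg_apply, abs_neg]; exact (hC ω).2)) hNm
  obtain ⟨hIDp, hEDp⟩ := conv _ _
    (hmg _ (measurable_const.sub hZ) _ (hY0.max measurable_const) _
      (measurable_const.sub hpiM))
    (hnn (fun ω => 1 - Z ω) (fun ω => max (Y0 ω) 0) hW0d (fun ω => le_max_right _ _)
      (fun q => 1 - pi q) hpposd)
    (hY0.max measurable_const) (fun ω => le_max_right _ _)
    (fun ω => habsle _ (hC ω).1) hDp
  obtain ⟨hIDm, hEDm⟩ := conv _ _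
    (hmg _ (measurable_const.sub hZ) _ (hY0.neg.max measurable_const) _
      (measurable_const.sub hpiM))
    (hnn (fun ω => 1 - Z ω) (fun ω => max (-Y0 ω) 0) hW0d (fun ω => le_max_right _ _)
      (fun q => 1 - pi q) hpposd)
    (hY0.neg.max measurable_const) (fun ω => le_max_right _ _)
    (fun ω => habsle _ (by rw [Pi.neg_apply, abs_neg]; exact (hC ω).1)) hDm
  -- integrability of positive/negative parts of Y1 and Y0
  have hIY1p : Integrable (fun ω => max (Y1 ω) 0) μ :=
    Integrable.mono' (integrable_const C) (hY1.max measurable_const).aestronglyMeasurable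
      (Filter.Eventually.of_forall fun ω => by
        rw [Real.norm_of_nonneg (le_max_right _ _)]; exact habsle _ (hC ω).2)
  have hIY1m : Integrable (fun ω => max (-Y1 ω) 0) μ :=
    Integrable.mono' (integrable_const C) (hY1.neg.max measurable_const).aestronglyMeasurable
      (Filter.Eventually.of_forall fun ω => by
        rw [Real.norm_of_nonneg (le_max_right _ _)]
        exact habsle _ (by rw [abs_neg]; exact (hC ω).2))
  have hIY0p : Integrable (fun ω => max (Y0 ω) 0) μ :=
    Integrable.mono' (integrable_const C) (hY0.max measurable_const).aestronglyMeasurable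
      (Filter.Eventually.of_forall fun ω => by
        rw [Real.norm_of_nonneg (le_max_right _ _)]; exact habsle _ (hC ω).1)
  have hIY0m : Integrable (fun ω => max (-Y0 ω) 0) μ :=
    Integrable.mono' (integrable_const C) (hY0.neg.max measurable_const).aestronglyMeasurable
      (Filter.Eventually.of_forall fun ω => by
        rw [Real.norm_of_nonneg (le_max_right _ _)]
        exact habsle _ (by rw [abs_neg]; exact (hC ω).1))
  -- numerator identity
  have hNum : ∫ ω, (R ω / rho (X ω)) * (Z ω / pi (X ω, V ω)) * Y ω ∂μ = ∫ ω, Y1 ω ∂μ := by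
    have hpt : ∀ ω, (R ω / rho (X ω)) * (Z ω / pi (X ω, V ω)) * Y ω
        = R ω * Z ω * max (Y1 ω) 0 / (rho (X ω) * pi (X ω, V ω))
          - R ω * Z ω * max (-Y1 ω) 0 / (rho (X ω) * pi (X ω, V ω)) := by
      intro ω
      have hZY : Z ω * Y ω = Z ω * Y1 ω := by
        rcases hZ01 ω with h | h
        · rw [h]; ring
        · rw [hY1eqZ ω h]
      rw [← sub_div, ← mul_sub, hmaxsub, div_mul_div_comm, div_mul_eq_mul_div,
        mul_assoc, mul_assoc, hZY]
    calc ∫ ω, (R ω / rho (X ω)) * (Z ω / pi (X ω, V ω)) * Y ω ∂μ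
        = ∫ ω, (R ω * Z ω * max (Y1 ω) 0 / (rho (X ω) * pi (X ω, V ω))
            - R ω * Z ω * max (-Y1 ω) 0 / (rho (X ω) * pi (X ω, V ω))) ∂μ :=
          integral_congr_ae (Filter.Eventually.of_forall hpt)
      _ = (∫ ω, R ω * Z ω * max (Y1 ω) 0 / (rho (X ω) * pi (X ω, V ω)) ∂μ)
            - ∫ ω, R ω * Z ω * max (-Y1 ω) 0 / (rho (X ω) * pi (X ω, V ω)) ∂μ :=
          integral_sub hINp hINm
      _ = (∫ ω, max (Y1 ω) 0 ∂μ) - ∫ ω, max (-Y1 ω) 0 ∂μ := by rw [hENp]; exact congrArg (HSub.hSub (∫ ω, max (Y1 ω) 0 ∂μ)) hENm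
      _ = ∫ ω, (max (Y1 ω) 0 - max (-Y1 ω) 0) ∂μ := (integral_sub hIY1p hIY1m).symm
      _ = ∫ ω, Y1 ω ∂μ := integral_congr_ae
          (Filter.Eventually.of_forall fun ω => hmaxsub (Y1 ω))
  -- denominator identity
  have hDen : ∫ ω, (R ω / rho (X ω)) * ((1 - Z ω) / (1 - pi (X ω, V ω))) * Y ω ∂μ
      = ∫ ω, Y0 ω ∂μ := by
    have hpt : ∀ ω, (R ω / rho (X ω)) * ((1 - Z ω) / (1 - pi (X ω, V ω))) * Y ω
        = R ω * (1 - Z ω) * max (Y0 ω) 0 / (rho (X ω) * (1 - pi (X ω, V ω)))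
          - R ω * (1 - Z ω) * max (-Y0 ω) 0 / (rho (X ω) * (1 - pi (X ω, V ω))) := by
      intro ω
      have hZY : (1 - Z ω) * Y ω = (1 - Z ω) * Y0 ω := by
        rcases hZ01 ω with h | h
        · rw [hY0eqZ ω h]
        · rw [h]; ring
      rw [← sub_div, ← mul_sub, hmaxsub, div_mul_div_comm, div_mul_eq_mul_div,
        mul_assoc, mul_assoc, hZY]
    calc ∫ ω, (R ω / rho (X ω)) * ((1 - Z ω) / (1 - pi (X ω, V ω))) * Y ω ∂μ
        = ∫ ω, (R ω * (1 - Z ω) * max (Y0 ω) 0 / (rho (X ω) * (1 - pi (X ω, V ω)))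
            - R ω * (1 - Z ω) * max (-Y0 ω) 0 / (rho (X ω) * (1 - pi (X ω, V ω)))) ∂μ :=
          integral_congr_ae (Filter.Eventually.of_forall hpt)
      _ = (∫ ω, R ω * (1 - Z ω) * max (Y0 ω) 0 / (rho (X ω) * (1 - pi (X ω, V ω))) ∂μ)
            - ∫ ω, R ω * (1 - Z ω) * max (-Y0 ω) 0 / (rho (X ω) * (1 - pi (X ω, V ω))) ∂μ :=
          integral_sub hIDp hIDm
      _ = (∫ ω, max (Y0 ω) 0 ∂μ) - ∫ ω, max (-Y0 ω) 0 ∂μ := congrArg₂ HSub.hSub hEDp hEDm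
      _ = ∫ ω, (max (Y0 ω) 0 - max (-Y0 ω) 0) ∂μ := (integral_sub hIY0p hIY0m).symm
      _ = ∫ ω, Y0 ω ∂μ := integral_congr_ae
          (Filter.Eventually.of_forall fun ω => hmaxsub (Y0 ω))
  refine ⟨?_, ?_⟩
  · rw [hDen]; exact hY0ne
  · rw [hNum, hDen]
end

section
/- (Proposition 2(b), identification of the causal risk ratio via selection probability and outcome mean) Under Assumptions (A1)–(A4) and E[Y0] ≠ 0, one has E[(R/ρ(X))·m(0,X,V)] ≠ 0 and ξ = E[(R/ρ(X))·m(1,X,V)] / E[(R/ρ(X))·m(0,X,V)]. -/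
open MeasureTheory ProbabilityTheory
open scoped ENNReal NNReal



lemma crr_int_of_bdd {Ω : Type*} [mΩ : MeasurableSpace Ω] {μ : MeasureTheory.Measure Ω}
    [IsFiniteMeasure μ] {h : Ω → ℝ}
    (hm : AEStronglyMeasurable h μ) {C : ℝ}
    (hb : ∀ᵐ ω ∂μ, |h ω| ≤ C) : Integrable h μ :=
  (integrable_const C).mono' hm
    (by filter_upwards [hb] with ω hω using by rwa [Real.norm_eq_abs])

lemma crr_condIndep_setIntegral_eq {Ω : Type*} {m' : MeasurableSpace Ω}
    [mΩ : MeasurableSpace Ω] [StandardBorelSpace Ω] [Nonempty Ω]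
    {μ : MeasureTheory.Measure Ω} [IsProbabilityMeasure μ]
    {β γ : Type*} [MeasurableSpace β] [MeasurableSpace γ]
    (hm' : m' ≤ mΩ)
    {f : Ω → β} {g : Ω → γ} (hf : Measurable f) (hg : Measurable g)
    (hind : CondIndepFun m' hm' f g μ)
    {A : Set β} {B : Set γ} (hA : MeasurableSet A) (hB : MeasurableSet B)
    {u : Set Ω} (hu : MeasurableSet[m'] u)
    {φ : Ω → ℝ} (hφm : StronglyMeasurable[m'] φ)
    (hφ : φ =ᵐ[μ] μ⟦f ⁻¹' A | m'⟧) :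
    ∫ ω in u ∩ g ⁻¹' B, (f ⁻¹' A).indicator (fun _ => (1:ℝ)) ω ∂μ
      = ∫ ω in u ∩ g ⁻¹' B, φ ω ∂μ := by
  have hfA : MeasurableSet (f ⁻¹' A) := hf hA
  have hgB : MeasurableSet (g ⁻¹' B) := hg hB
  have huΩ : MeasurableSet u := hm' u hu
  haveI : SigmaFinite (μ.trim hm') := by infer_instance
  have hindFA : Integrable ((f ⁻¹' A).indicator (fun _ => (1:ℝ))) μ :=
    (integrable_const (1:ℝ)).indicator hfA
  have hindGB : Integrable ((g ⁻¹' B).indicator (fun _ => (1:ℝ))) μ :=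
    (integrable_const (1:ℝ)).indicator hgB
  have hindI : Integrable ((f ⁻¹' A ∩ g ⁻¹' B).indicator (fun _ => (1:ℝ))) μ :=
    (integrable_const (1:ℝ)).indicator (hfA.inter hgB)
  have hφint : Integrable φ μ := integrable_condExp.congr hφ.symm
  have hmulfun : (φ * (g ⁻¹' B).indicator (fun _ => (1:ℝ)))
      = (g ⁻¹' B).indicator φ := by
    funext ω
    by_cases hω : ω ∈ g ⁻¹' B <;> simp [Set.indicator_apply, hω]
  have hφmul : Integrable (φ * (g ⁻¹' B).indicator (fun _ => (1:ℝ))) μ := by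
    rw [hmulfun]; exact hφint.indicator hgB
  have hcmul := condExp_mul_of_stronglyMeasurable_left (m := m') hφm hφmul hindGB
  have hmulCI := (condIndepFun_iff_condExp_inter_preimage_eq_mul
    (m' := m') (hm' := hm') (μ := μ) hf hg).mp hind A B hA hB
  calc ∫ ω in u ∩ g ⁻¹' B, (f ⁻¹' A).indicator (fun _ => (1:ℝ)) ω ∂μ
      = ∫ ω in u, (g ⁻¹' B).indicator ((f ⁻¹' A).indicator (fun _ => (1:ℝ))) ω ∂μ :=
        (setIntegral_indicator hgB).symm
    _ = ∫ ω in u, (f ⁻¹' A ∩ g ⁻¹' B).indicator (fun _ => (1:ℝ)) ω ∂μ := by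
        rw [Set.indicator_indicator, Set.inter_comm]
    _ = ∫ ω in u, (μ⟦f ⁻¹' A ∩ g ⁻¹' B | m'⟧) ω ∂μ :=
        (setIntegral_condExp hm' hindI hu).symm
    _ = ∫ ω in u, φ ω * (μ⟦g ⁻¹' B | m'⟧) ω ∂μ := by
        refine integral_congr_ae ?_
        have h1 : (μ⟦f ⁻¹' A ∩ g ⁻¹' B | m'⟧)
            =ᵐ[μ] fun ω => φ ω * (μ⟦g ⁻¹' B | m'⟧) ω := by
          filter_upwards [hmulCI, hφ] with ω h1 h2
          rw [h1, h2]
        exact ae_restrict_of_ae h1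
    _ = ∫ ω in u, (μ[φ * (g ⁻¹' B).indicator (fun _ => (1:ℝ)) | m']) ω ∂μ := by
        refine integral_congr_ae (ae_restrict_of_ae ?_)
        filter_upwards [hcmul] with ω h
        rw [Pi.mul_apply] at h
        exact h.symm
    _ = ∫ ω in u, (φ * (g ⁻¹' B).indicator (fun _ => (1:ℝ))) ω ∂μ :=
        setIntegral_condExp hm' hφmul hu
    _ = ∫ ω in u, (g ⁻¹' B).indicator φ ω ∂μ := by rw [hmulfun]
    _ = ∫ ω in u ∩ g ⁻¹' B, φ ω ∂μ := setIntegral_indicator hgB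

lemma crr_integral_mul_comp_eq {Ω : Type*} [mΩ : MeasurableSpace Ω]
    {μ : MeasureTheory.Measure Ω}
    {δ : Type*} [MeasurableSpace δ] [IsProbabilityMeasure μ]
    {T : Ω → δ} (hT : Measurable T) {a b : Ω → ℝ}
    (haM : Measurable a) (hbM : Measurable b)
    (ha0 : 0 ≤ᵐ[μ] a) (hb0 : 0 ≤ᵐ[μ] b)
    (haI : Integrable a μ) (hbI : Integrable b μ)
    (h : ∀ E : Set δ, MeasurableSet E → ∫ ω in T ⁻¹' E, a ω ∂μ = ∫ ω in T ⁻¹' E, b ω ∂μ)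
    {ψ : δ → ℝ} (hψ : Measurable ψ) :
    ∫ ω, a ω * ψ (T ω) ∂μ = ∫ ω, b ω * ψ (T ω) ∂μ := by
  have hconv : ∀ (c : Ω → ℝ), Measurable c → 0 ≤ᵐ[μ] c → Integrable c μ →
      ∀ E : Set δ, MeasurableSet E →
      (μ.withDensity (fun ω => ((Real.toNNReal (c ω) : ℝ≥0) : ℝ≥0∞))).map T E
        = ENNReal.ofReal (∫ ω in T ⁻¹' E, c ω ∂μ) := by
    intro c hcM hc0 hcI E hE
    rw [Measure.map_apply hT hE, withDensity_apply _ (hT hE),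
      ofReal_integral_eq_lintegral_ofReal hcI.integrableOn (ae_restrict_of_ae hc0)]
    rfl
  have key : (μ.withDensity (fun ω => ((Real.toNNReal (a ω) : ℝ≥0) : ℝ≥0∞))).map T
      = (μ.withDensity (fun ω => ((Real.toNNReal (b ω) : ℝ≥0) : ℝ≥0∞))).map T := by
    ext E hE
    rw [hconv a haM ha0 haI E hE, hconv b hbM hb0 hbI E hE, h E hE]
  have htr : ∀ (c : Ω → ℝ), Measurable c → 0 ≤ᵐ[μ] c →
      ∫ p, ψ p ∂((μ.withDensity (fun ω => ((Real.toNNReal (c ω) : ℝ≥0) : ℝ≥0∞))).map T)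
        = ∫ ω, c ω * ψ (T ω) ∂μ := by
    intro c hcM hc0
    rw [integral_map hT.aemeasurable hψ.aestronglyMeasurable,
      integral_withDensity_eq_integral_smul hcM.real_toNNReal]
    refine integral_congr_ae ?_
    filter_upwards [hc0] with ω h0
    simp [NNReal.smul_def, Real.coe_toNNReal _ h0]
  rw [← htr a haM ha0, ← htr b hbM hb0, key]

lemma crr_aux_select {Ω 𝒳 𝒱 γ : Type*} [mΩ : MeasurableSpace Ω] [StandardBorelSpace Ω]
    [Nonempty Ω] [MeasurableSpace 𝒳] [MeasurableSpace 𝒱] [MeasurableSpace γ]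
    {μ : MeasureTheory.Measure Ω} [IsProbabilityMeasure μ]
    {X : Ω → 𝒳} {V : Ω → 𝒱} {R : Ω → ℝ} {G : Ω → γ} {ρ : Ω → ℝ}
    (hX : Measurable X) (hV : Measurable V) (hR : Measurable R) (hG : Measurable G)
    (hR01 : ∀ ω, R ω = 0 ∨ R ω = 1)
    (hA1 : CondIndepFun (MeasurableSpace.comap X inferInstance)
      (measurable_iff_comap_le.mp hX) R G μ)
    (hVG : ∀ B : Set 𝒱, MeasurableSet B → ∃ t : Set γ, MeasurableSet t ∧ G ⁻¹' t = V ⁻¹' B)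
    (hρM : Measurable ρ)
    (hρ_c : Measurable[MeasurableSpace.comap X inferInstance] ρ)
    (hρbd : ∀ᵐ ω ∂μ, |ρ ω| ≤ 1) (hρ0 : ∀ᵐ ω ∂μ, 0 ≤ ρ ω)
    (hrho : ρ =ᵐ[μ] μ[R | MeasurableSpace.comap X inferInstance])
    {ψ : 𝒳 × 𝒱 → ℝ} (hψ : Measurable ψ) :
    ∫ ω, R ω * ψ (X ω, V ω) ∂μ = ∫ ω, ρ ω * ψ (X ω, V ω) ∂μ := by
  have hmX : MeasurableSpace.comap X inferInstance ≤ mΩ := measurable_iff_comap_le.mp hX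
  have hXVm : Measurable (fun ω => (X ω, V ω)) := hX.prodMk hV
  have hRabs : ∀ ω, |R ω| ≤ 1 := by
    intro ω; rcases hR01 ω with h | h <;> rw [h] <;> norm_num
  have hR0 : ∀ ω, (0:ℝ) ≤ R ω := by
    intro ω; rcases hR01 ω with h | h <;> rw [h] <;> norm_num
  have hIntR : Integrable R μ := crr_int_of_bdd hR.aestronglyMeasurable (ae_of_all _ hRabs)
  have hIntρ : Integrable ρ μ := crr_int_of_bdd hρM.aestronglyMeasurable hρbd
  have hRind : R = (R ⁻¹' {1}).indicator (fun _ => (1:ℝ)) := by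
    funext ω; rcases hR01 ω with h | h <;> simp [Set.indicator_apply, h]
  have hρeq : ρ =ᵐ[μ] μ⟦R ⁻¹' {1} | MeasurableSpace.comap X inferInstance⟧ :=
    hrho.trans (condExp_congr_ae (ae_of_all _ fun ω => congrFun hRind ω))
  have htot : ∫ ω, R ω ∂μ = ∫ ω, ρ ω ∂μ :=
    ((integral_congr_ae hrho).trans (integral_condExp hmX)).symm
  have hS1 : ∀ t : Set (𝒳 × 𝒱), MeasurableSet t →
      ∫ ω in (fun ω => (X ω, V ω)) ⁻¹' t, R ω ∂μ
        = ∫ ω in (fun ω => (X ω, V ω)) ⁻¹' t, ρ ω ∂μ := by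
    intro t ht
    refine MeasurableSpace.induction_on_inter
      (C := fun t _ => ∫ ω in (fun ω => (X ω, V ω)) ⁻¹' t, R ω ∂μ
        = ∫ ω in (fun ω => (X ω, V ω)) ⁻¹' t, ρ ω ∂μ)
      generateFrom_prod.symm isPiSystem_prod (by simp) ?_ ?_ ?_ _ ht
    · -- basic
      rintro _ ⟨A', hA', B, hB, rfl⟩
      obtain ⟨tg, htg, htgeq⟩ := hVG B hB
      have hpre : (fun ω => (X ω, V ω)) ⁻¹' (A' ×ˢ B) = X ⁻¹' A' ∩ V ⁻¹' B := by
        ext ω; simp [Set.mem_prod]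
      have hu : MeasurableSet[MeasurableSpace.comap X inferInstance] (X ⁻¹' A') :=
        ⟨A', hA', rfl⟩
      have hP := crr_condIndep_setIntegral_eq (μ := μ) hmX hR hG hA1
        (measurableSet_singleton (1:ℝ)) htg hu hρ_c.stronglyMeasurable hρeq
      rw [htgeq] at hP
      rw [hpre]
      calc ∫ ω in X ⁻¹' A' ∩ V ⁻¹' B, R ω ∂μ
          = ∫ ω in X ⁻¹' A' ∩ V ⁻¹' B, (R ⁻¹' {1}).indicator (fun _ => (1:ℝ)) ω ∂μ := by
            rw [← hRind]
        _ = ∫ ω in X ⁻¹' A' ∩ V ⁻¹' B, ρ ω ∂μ := hP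
    · -- compl
      intro t ht hC
      rw [Set.preimage_compl]
      have e1 := integral_add_compl (hXVm ht) hIntR
      have e2 := integral_add_compl (hXVm ht) hIntρ
      linarith
    · -- union
      intro f hdf hmf hCf
      rw [Set.preimage_iUnion,
        integral_iUnion (fun i => hXVm (hmf i)) (fun i j hij => (hdf hij).preimage _)
          hIntR.integrableOn,
        integral_iUnion (fun i => hXVm (hmf i)) (fun i j hij => (hdf hij).preimage _)
          hIntρ.integrableOn]
      exact tsum_congr hCf
  exact crr_integral_mul_comp_eq hXVm hR hρM (ae_of_all _ hR0) hρ0 hIntR hIntρ hS1 hψ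

lemma crr_aux_condexp {Ω δ γ : Type*} [mΩ : MeasurableSpace Ω] [StandardBorelSpace Ω]
    [Nonempty Ω] [MeasurableSpace δ] [MeasurableSpace γ]
    {μ : MeasureTheory.Measure Ω} [IsProbabilityMeasure μ]
    {Z : Ω → ℝ} {U : Ω → δ} {G : Ω → γ} {π : Ω → ℝ} {ψ : γ → ℝ} {W : Ω → ℝ} {CY : ℝ}
    (hZ : Measurable Z) (hU : Measurable U) (hG : Measurable G)
    (hZ01 : ∀ ω, Z ω = 0 ∨ Z ω = 1)
    (hA2 : CondIndepFun (MeasurableSpace.comap U inferInstance)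
      (measurable_iff_comap_le.mp hU) Z G μ)
    (hπM : Measurable π)
    (hπ_c : Measurable[MeasurableSpace.comap U inferInstance] π)
    (hπbd : ∀ᵐ ω ∂μ, 0 ≤ π ω ∧ |π ω| ≤ 1)
    (hpi : π =ᵐ[μ] μ[Z | MeasurableSpace.comap U inferInstance])
    (hψ : Measurable ψ) (hW : Measurable W) (hψW : ∀ ω, ψ (G ω) = W ω)
    (hCY0 : 0 ≤ CY) (hWbd : ∀ ω, |W ω| ≤ CY) :
    μ[W | MeasurableSpace.comap U inferInstance]
      =ᵐ[μ] μ[W | MeasurableSpace.comap (fun ω => (Z ω, U ω)) inferInstance] := by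
  have hTZ : Measurable (fun ω => (Z ω, U ω)) := hZ.prodMk hU
  have hm2 : MeasurableSpace.comap U inferInstance ≤ mΩ := measurable_iff_comap_le.mp hU
  have hm3 : MeasurableSpace.comap (fun ω => (Z ω, U ω)) inferInstance ≤ mΩ :=
    measurable_iff_comap_le.mp hTZ
  have hle : MeasurableSpace.comap U inferInstance
      ≤ MeasurableSpace.comap (fun ω => (Z ω, U ω)) inferInstance := by
    calc MeasurableSpace.comap U inferInstance
        = MeasurableSpace.comap (fun ω => (Z ω, U ω))
            (MeasurableSpace.comap Prod.snd inferInstance) := by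
          rw [MeasurableSpace.comap_comp]; rfl
      _ ≤ MeasurableSpace.comap (fun ω => (Z ω, U ω)) inferInstance :=
          MeasurableSpace.comap_mono (measurable_iff_comap_le.mp measurable_snd)
  have hZabs : ∀ ω, |Z ω| ≤ 1 := by
    intro ω; rcases hZ01 ω with h | h <;> rw [h] <;> norm_num
  have hIntZ : Integrable Z μ := crr_int_of_bdd hZ.aestronglyMeasurable (ae_of_all _ hZabs)
  have hIntW : Integrable W μ := crr_int_of_bdd hW.aestronglyMeasurable (ae_of_all _ hWbd)
  set bW := μ[W | MeasurableSpace.comap U inferInstance] with hbWdef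
  have hbWbd : ∀ᵐ ω ∂μ, |bW ω| ≤ CY := by
    have h := ae_bdd_condExp_of_ae_bdd (m := MeasurableSpace.comap U inferInstance)
      (μ := μ) (R := CY.toNNReal) (f := W)
      (ae_of_all _ fun ω => by rw [Real.coe_toNNReal _ hCY0]; exact hWbd ω)
    filter_upwards [h] with ω hω
    rwa [Real.coe_toNNReal _ hCY0] at hω
  have hIntbW : Integrable bW μ := integrable_condExp
  -- the key one-set identity
  have hG1 : ∀ B : Set δ, MeasurableSet B →
      ∫ ω in Z ⁻¹' {1} ∩ U ⁻¹' B, bW ω ∂μ = ∫ ω in Z ⁻¹' {1} ∩ U ⁻¹' B, W ω ∂μ := by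
    intro B hB
    have huΩ : MeasurableSet (U ⁻¹' B) := hU hB
    have hu : MeasurableSet[MeasurableSpace.comap U inferInstance] (U ⁻¹' B) := ⟨B, hB, rfl⟩
    set q : Ω → ℝ := (U ⁻¹' B).indicator (fun _ => (1:ℝ)) with hqdef
    have hq_c : Measurable[MeasurableSpace.comap U inferInstance] q :=
      measurable_const.indicator hu
    have hqm : Measurable q := measurable_const.indicator huΩ
    have hqabs : ∀ ω, |q ω| ≤ 1 := fun ω => by
      by_cases h : ω ∈ U ⁻¹' B <;> simp [hqdef, Set.indicator_apply, h]
    have hq0 : ∀ ω, 0 ≤ q ω := fun ω => by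
      by_cases h : ω ∈ U ⁻¹' B <;> simp [hqdef, Set.indicator_apply, h]
    have hZq : ∀ (h : Ω → ℝ), ∫ ω in Z ⁻¹' {1} ∩ U ⁻¹' B, h ω ∂μ
        = ∫ ω, Z ω * q ω * h ω ∂μ := by
      intro h
      rw [← integral_indicator ((hZ (measurableSet_singleton 1)).inter huΩ)]
      refine integral_congr_ae (ae_of_all _ fun ω => ?_)
      rcases hZ01 ω with hz | hz <;> by_cases hb : ω ∈ U ⁻¹' B <;>
        simp [Set.indicator_apply, hqdef, hz, hb]
    have hq3 : ∫ ω, Z ω * q ω * bW ω ∂μ = ∫ ω, π ω * q ω * bW ω ∂μ := by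
      have hc'sm : StronglyMeasurable[MeasurableSpace.comap U inferInstance]
          (fun ω => q ω * bW ω) :=
        hq_c.stronglyMeasurable.mul stronglyMeasurable_condExp
      have habs : ∀ᵐ ω ∂μ, |q ω * bW ω| ≤ CY := by
        filter_upwards [hbWbd] with ω hω
        rw [abs_mul]
        calc |q ω| * |bW ω| ≤ 1 * CY :=
              mul_le_mul (hqabs ω) hω (abs_nonneg _) zero_le_one
          _ = CY := one_mul _
      have hInt1 : Integrable ((fun ω => q ω * bW ω) * Z) μ := by
        refine crr_int_of_bdd (((hc'sm.mono hm2).aestronglyMeasurable).mul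
          hZ.aestronglyMeasurable) (C := CY * 1) ?_
        filter_upwards [habs] with ω hω
        rw [Pi.mul_apply, abs_mul]
        exact mul_le_mul hω (hZabs ω) (abs_nonneg _) hCY0
      have hmul := condExp_mul_of_stronglyMeasurable_left
        (m := MeasurableSpace.comap U inferInstance) hc'sm hInt1 hIntZ
      calc ∫ ω, Z ω * q ω * bW ω ∂μ
          = ∫ ω, ((fun ω => q ω * bW ω) * Z) ω ∂μ :=
            integral_congr_ae (ae_of_all _ fun ω => by simp [Pi.mul_apply]; ring)
        _ = ∫ ω, (μ[(fun ω => q ω * bW ω) * Z | MeasurableSpace.comap U inferInstance]) ω ∂μ :=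
            (integral_condExp hm2).symm
        _ = ∫ ω, π ω * q ω * bW ω ∂μ := by
            refine integral_congr_ae ?_
            filter_upwards [hmul, hpi] with ω h1 h2
            rw [h1, Pi.mul_apply, ← h2]
            ring
    have hq1 : ∫ ω, Z ω * q ω * W ω ∂μ = ∫ ω, π ω * q ω * W ω ∂μ := by
      have hZind : Z = (Z ⁻¹' {1}).indicator (fun _ => (1:ℝ)) := by
        funext ω; rcases hZ01 ω with h | h <;> simp [Set.indicator_apply, h]
      have hπeq : π =ᵐ[μ] μ⟦Z ⁻¹' {1} | MeasurableSpace.comap U inferInstance⟧ :=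
        hpi.trans (condExp_congr_ae (ae_of_all _ fun ω => congrFun hZind ω))
      have hsetEq : ∀ E : Set γ, MeasurableSet E →
          ∫ ω in G ⁻¹' E, Z ω * q ω ∂μ = ∫ ω in G ⁻¹' E, π ω * q ω ∂μ := by
        intro E hE
        have hP := crr_condIndep_setIntegral_eq (μ := μ) hm2 hZ hG hA2
          (measurableSet_singleton (1:ℝ)) hE hu hπ_c.stronglyMeasurable hπeq
        have hfun1 : (fun ω => Z ω * q ω)
            = (U ⁻¹' B).indicator ((Z ⁻¹' {1}).indicator (fun _ => (1:ℝ))) := by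
          funext ω
          rcases hZ01 ω with h | h <;> by_cases hb : ω ∈ U ⁻¹' B <;>
            simp [Set.indicator_apply, hqdef, h, hb]
        have hfun2 : (fun ω => π ω * q ω) = (U ⁻¹' B).indicator π := by
          funext ω
          by_cases hb : ω ∈ U ⁻¹' B <;> simp [Set.indicator_apply, hqdef, hb]
        rw [hfun1, hfun2, setIntegral_indicator huΩ, setIntegral_indicator huΩ,
          Set.inter_comm (G ⁻¹' E) (U ⁻¹' B)]
        exact hP
      have hIntZq : Integrable (fun ω => Z ω * q ω) μ := by
        refine crr_int_of_bdd (hZ.mul hqm).aestronglyMeasurable (C := 1 * 1) ?_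
        refine ae_of_all _ fun ω => ?_
        rw [abs_mul]
        exact mul_le_mul (hZabs ω) (hqabs ω) (abs_nonneg _) zero_le_one
      have hIntπq : Integrable (fun ω => π ω * q ω) μ := by
        refine crr_int_of_bdd (hπM.mul hqm).aestronglyMeasurable (C := 1 * 1) ?_
        filter_upwards [hπbd] with ω hω
        rw [abs_mul]
        exact mul_le_mul hω.2 (hqabs ω) (abs_nonneg _) zero_le_one
      have h5 := crr_integral_mul_comp_eq hG (hZ.mul hqm) (hπM.mul hqm)
        (ae_of_all _ fun ω => mul_nonneg (by rcases hZ01 ω with h | h <;> rw [h] <;> norm_num)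
          (hq0 ω))
        (by filter_upwards [hπbd] with ω hω; exact mul_nonneg hω.1 (hq0 ω))
        hIntZq hIntπq hsetEq hψ
      calc ∫ ω, Z ω * q ω * W ω ∂μ
          = ∫ ω, Z ω * q ω * ψ (G ω) ∂μ := by
            refine integral_congr_ae (ae_of_all _ fun ω => ?_)
            simp only [hψW]
        _ = ∫ ω, π ω * q ω * ψ (G ω) ∂μ := h5
        _ = ∫ ω, π ω * q ω * W ω ∂μ := by
            refine integral_congr_ae (ae_of_all _ fun ω => ?_)
            simp only [hψW]
    have hq2 : ∫ ω, π ω * q ω * W ω ∂μ = ∫ ω, π ω * q ω * bW ω ∂μ := by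
      have hcsm : StronglyMeasurable[MeasurableSpace.comap U inferInstance]
          (fun ω => π ω * q ω) := (hπ_c.mul hq_c).stronglyMeasurable
      have hInt1 : Integrable ((fun ω => π ω * q ω) * W) μ := by
        refine crr_int_of_bdd (((hcsm.mono hm2).aestronglyMeasurable).mul
          hW.aestronglyMeasurable) (C := 1 * 1 * CY) ?_
        filter_upwards [hπbd] with ω hω
        rw [Pi.mul_apply, abs_mul, abs_mul]
        exact mul_le_mul (mul_le_mul hω.2 (hqabs ω) (abs_nonneg _) zero_le_one)
          (hWbd ω) (abs_nonneg _) (by norm_num)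
      have hmul := condExp_mul_of_stronglyMeasurable_left
        (m := MeasurableSpace.comap U inferInstance) hcsm hInt1 hIntW
      calc ∫ ω, π ω * q ω * W ω ∂μ
          = ∫ ω, ((fun ω => π ω * q ω) * W) ω ∂μ :=
            integral_congr_ae (ae_of_all _ fun ω => by simp [Pi.mul_apply])
        _ = ∫ ω, (μ[(fun ω => π ω * q ω) * W | MeasurableSpace.comap U inferInstance]) ω ∂μ :=
            (integral_condExp hm2).symm
        _ = ∫ ω, π ω * q ω * bW ω ∂μ := by
            refine integral_congr_ae ?_
            filter_upwards [hmul] with ω h1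
            rw [h1, Pi.mul_apply]
    rw [hZq bW, hZq W, hq3, hq1]
    exact hq2.symm
  -- uniqueness of conditional expectation
  refine ae_eq_condExp_of_forall_setIntegral_eq hm3 hIntW
    (fun s _ _ => integrable_condExp.integrableOn) ?_
    ((stronglyMeasurable_condExp.mono hle).aestronglyMeasurable)
  rintro s ⟨t, ht, rfl⟩ -
  refine MeasurableSpace.induction_on_inter
    (C := fun t _ => ∫ ω in (fun ω => (Z ω, U ω)) ⁻¹' t, bW ω ∂μ
      = ∫ ω in (fun ω => (Z ω, U ω)) ⁻¹' t, W ω ∂μ)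
    generateFrom_prod.symm isPiSystem_prod (by simp) ?_ ?_ ?_ _ ht
  · -- basic
    rintro _ ⟨A, hA, B, hB, rfl⟩
    have hpre : (fun ω => (Z ω, U ω)) ⁻¹' (A ×ˢ B) = Z ⁻¹' A ∩ U ⁻¹' B := by
      ext ω; simp [Set.mem_prod]
    have huΩ : MeasurableSet (U ⁻¹' B) := hU hB
    have hu : MeasurableSet[MeasurableSpace.comap U inferInstance] (U ⁻¹' B) := ⟨B, hB, rfl⟩
    have hG0 : ∫ ω in U ⁻¹' B, bW ω ∂μ = ∫ ω in U ⁻¹' B, W ω ∂μ :=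
      setIntegral_condExp hm2 hIntW hu
    rw [hpre]
    by_cases h0 : (0:ℝ) ∈ A <;> by_cases h1 : (1:ℝ) ∈ A
    · have hZA : Z ⁻¹' A = Set.univ := by
        ext ω; simp only [Set.mem_preimage, Set.mem_univ, iff_true]
        rcases hZ01 ω with h | h <;> rw [h] <;> assumption
      rw [hZA, Set.univ_inter]; exact hG0
    · have hdisj : Disjoint (Z ⁻¹' {1} ∩ U ⁻¹' B) (Z ⁻¹' A ∩ U ⁻¹' B) := by
        rw [Set.disjoint_left]; rintro ω ⟨hz, -⟩ ⟨ha, -⟩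
        rw [Set.mem_preimage, Set.mem_singleton_iff] at hz
        rw [Set.mem_preimage, hz] at ha; exact h1 ha
      have hunion : (Z ⁻¹' {1} ∩ U ⁻¹' B) ∪ (Z ⁻¹' A ∩ U ⁻¹' B) = U ⁻¹' B := by
        ext ω; constructor
        · rintro (⟨-, h⟩ | ⟨-, h⟩) <;> exact h
        · intro h; rcases hZ01 ω with hz | hz
          · exact Or.inr ⟨by rw [Set.mem_preimage, hz]; exact h0, h⟩
          · exact Or.inl ⟨by simp [Set.mem_preimage, hz], h⟩
      have hmeasA : MeasurableSet (Z ⁻¹' A ∩ U ⁻¹' B) := (hZ hA).inter huΩ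
      have e1 := setIntegral_union hdisj hmeasA integrable_condExp.integrableOn
        integrable_condExp.integrableOn (f := bW) (μ := μ)
      have e2 := setIntegral_union hdisj hmeasA hIntW.integrableOn hIntW.integrableOn
        (f := W) (μ := μ)
      rw [hunion] at e1 e2
      have h3 := hG1 B hB
      linarith
    · have hZA : Z ⁻¹' A = Z ⁻¹' {1} := by
        ext ω; rcases hZ01 ω with h | h <;> simp [Set.mem_preimage, h, h0, h1]
      rw [hZA]; exact hG1 B hB
    · have hZA : Z ⁻¹' A = ∅ := by
        ext ω; simp only [Set.mem_preimage, Set.mem_empty_iff_false, iff_false]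
        rcases hZ01 ω with h | h <;> rw [h] <;> assumption
      rw [hZA, Set.empty_inter]; simp
  · -- compl
    intro t ht hC
    rw [Set.preimage_compl]
    have htotW : ∫ ω, bW ω ∂μ = ∫ ω, W ω ∂μ := integral_condExp hm2
    have e1 := integral_add_compl (hTZ ht) hIntbW
    have e2 := integral_add_compl (hTZ ht) hIntW
    linarith
  · -- union
    intro f hdf hmf hCf
    rw [Set.preimage_iUnion,
      integral_iUnion (fun i => hTZ (hmf i)) (fun i j hij => (hdf hij).preimage _)
        hIntbW.integrableOn,
      integral_iUnion (fun i => hTZ (hmf i)) (fun i j hij => (hdf hij).preimage _)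
        hIntW.integrableOn]
    exact tsum_congr hCf

theorem crr_identification_outcome_mean
    {Ω 𝒳 𝒱 : Type*}
    [MeasurableSpace Ω] [StandardBorelSpace Ω] [Nonempty Ω]
    [MeasurableSpace 𝒳] [StandardBorelSpace 𝒳]
    [MeasurableSpace 𝒱] [StandardBorelSpace 𝒱]
    (μ : Measure Ω) [IsProbabilityMeasure μ]
    (X : Ω → 𝒳) (V : Ω → 𝒱) (Z R Y0 Y1 : Ω → ℝ)
    (hX : Measurable X) (hV : Measurable V) (hZ : Measurable Z)
    (hR : Measurable R) (hY0 : Measurable Y0) (hY1 : Measurable Y1)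
    (hZ01 : ∀ ω, Z ω = 0 ∨ Z ω = 1) (hR01 : ∀ ω, R ω = 0 ∨ R ω = 1)
    (hYbd : ∃ C, ∀ ω, |Y0 ω| ≤ C ∧ |Y1 ω| ≤ C)
    (Y : Ω → ℝ) (hYdef : ∀ ω, Y ω = Z ω * Y1 ω + (1 - Z ω) * Y0 ω)
    (pi : 𝒳 × 𝒱 → ℝ) (rho : 𝒳 → ℝ)
    (hpiM : Measurable pi) (hrhoM : Measurable rho)
    (hpi : (fun ω => pi (X ω, V ω)) =ᵐ[μ]
      μ[Z | MeasurableSpace.comap (fun ω => (X ω, V ω)) inferInstance])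
    (hrho : (fun ω => rho (X ω)) =ᵐ[μ]
      μ[R | MeasurableSpace.comap X inferInstance])
    (hA1 : CondIndepFun (MeasurableSpace.comap X inferInstance)
      (measurable_iff_comap_le.mp hX) R (fun ω => (Y ω, Z ω, V ω)) μ)
    (hA2 : CondIndepFun (MeasurableSpace.comap (fun ω => (X ω, V ω)) inferInstance)
      (measurable_iff_comap_le.mp (hX.prodMk hV)) Z (fun ω => (Y0 ω, Y1 ω)) μ)
    (hA3 : ∀ᵐ ω ∂μ, 0 < pi (X ω, V ω) ∧ pi (X ω, V ω) < 1)
    (hA4 : ∀ᵐ ω ∂μ, 0 < rho (X ω))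
    (mo : ℝ × 𝒳 × 𝒱 → ℝ) (hmoM : Measurable mo) (hmoBd : ∃ C, ∀ p, |mo p| ≤ C)
    (hmo : (fun ω => mo (Z ω, X ω, V ω)) =ᵐ[μ]
      μ[Y | MeasurableSpace.comap (fun ω => (Z ω, X ω, V ω)) inferInstance])
    (hY0ne : ∫ ω, Y0 ω ∂μ ≠ 0) :
    (∫ ω, (R ω / rho (X ω)) * mo (0, X ω, V ω) ∂μ ≠ 0) ∧
    (∫ ω, Y1 ω ∂μ) / (∫ ω, Y0 ω ∂μ)
      = (∫ ω, (R ω / rho (X ω)) * mo (1, X ω, V ω) ∂μ)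
        / ∫ ω, (R ω / rho (X ω)) * mo (0, X ω, V ω) ∂μ := by
  classical
  obtain ⟨CY, hCY⟩ := hYbd
  obtain ⟨CM, hCM⟩ := hmoBd
  have hXVm : Measurable (fun ω => (X ω, V ω)) := hX.prodMk hV
  have hYm : Measurable Y := by
    have hy : Y = fun ω => Z ω * Y1 ω + (1 - Z ω) * Y0 ω := funext hYdef
    rw [hy]; exact (hZ.mul hY1).add ((measurable_const.sub hZ).mul hY0)
  have hZXVm : Measurable (fun ω => (Z ω, X ω, V ω)) := hZ.prodMk hXVm
  have hYZVm : Measurable (fun ω => (Y ω, Z ω, V ω)) := hYm.prodMk (hZ.prodMk hV)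
  have hmXV : MeasurableSpace.comap (fun ω => (X ω, V ω)) inferInstance ≤ _ :=
    measurable_iff_comap_le.mp hXVm
  have hmZXV : MeasurableSpace.comap (fun ω => (Z ω, X ω, V ω)) inferInstance ≤ _ :=
    measurable_iff_comap_le.mp hZXVm
  have hXV_c : Measurable[MeasurableSpace.comap (fun ω => (X ω, V ω)) inferInstance]
      (fun ω => (X ω, V ω)) := measurable_iff_comap_le.mpr le_rfl
  have hX_c : Measurable[MeasurableSpace.comap X inferInstance] X :=
    measurable_iff_comap_le.mpr le_rfl
  have hZXV_c : Measurable[MeasurableSpace.comap (fun ω => (Z ω, X ω, V ω)) inferInstance]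
      (fun ω => (Z ω, X ω, V ω)) := measurable_iff_comap_le.mpr le_rfl
  have hpi_c : Measurable[MeasurableSpace.comap (fun ω => (X ω, V ω)) inferInstance]
      (fun ω => pi (X ω, V ω)) := hpiM.comp hXV_c
  have hrho_c : Measurable[MeasurableSpace.comap X inferInstance]
      (fun ω => rho (X ω)) := hrhoM.comp hX_c
  have hZ_c : Measurable[MeasurableSpace.comap (fun ω => (Z ω, X ω, V ω)) inferInstance] Z :=
    measurable_fst.comp hZXV_c
  -- boundedness facts
  have hZabs : ∀ ω, |Z ω| ≤ 1 := by
    intro ω; rcases hZ01 ω with h | h <;> rw [h] <;> norm_num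
  have hRabs : ∀ ω, |R ω| ≤ 1 := by
    intro ω; rcases hR01 ω with h | h <;> rw [h] <;> norm_num
  have hCY0 : 0 ≤ CY := le_trans (abs_nonneg _) (hCY (Classical.arbitrary Ω)).1
  -- integrability
  have hIntY1 : Integrable Y1 μ :=
    crr_int_of_bdd hY1.aestronglyMeasurable (ae_of_all _ fun ω => (hCY ω).2)
  have hIntY0 : Integrable Y0 μ :=
    crr_int_of_bdd hY0.aestronglyMeasurable (ae_of_all _ fun ω => (hCY ω).1)
  have hIntZ : Integrable Z μ :=
    crr_int_of_bdd hZ.aestronglyMeasurable (ae_of_all _ hZabs)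
  have hπbd01 : ∀ᵐ ω ∂μ, 0 ≤ pi (X ω, V ω) ∧ |pi (X ω, V ω)| ≤ 1 := by
    filter_upwards [hA3] with ω h
    exact ⟨le_of_lt h.1, abs_le.mpr ⟨by linarith [h.1], le_of_lt h.2⟩⟩
  -- step (2b) : condexp of Y1/Y0 does not change when adding Z
  have hQ1 : μ[Y1 | MeasurableSpace.comap (fun ω => (X ω, V ω)) inferInstance]
      =ᵐ[μ] μ[Y1 | MeasurableSpace.comap (fun ω => (Z ω, X ω, V ω)) inferInstance] := by
    have h := crr_aux_condexp (μ := μ) (ψ := fun p : ℝ × ℝ => min CY (max (-CY) p.2))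
      hZ hXVm (hY0.prodMk hY1) hZ01 hA2 (hpiM.comp hXVm) hpi_c hπbd01 hpi
      (measurable_const.min (measurable_const.max measurable_snd)) hY1
      (fun ω => by
        obtain ⟨hl, hr⟩ := abs_le.mp (hCY ω).2
        simp only
        rw [max_eq_right hl, min_eq_right hr])
      hCY0 (fun ω => (hCY ω).2)
    exact h
  have hQ0 : μ[Y0 | MeasurableSpace.comap (fun ω => (X ω, V ω)) inferInstance]
      =ᵐ[μ] μ[Y0 | MeasurableSpace.comap (fun ω => (Z ω, X ω, V ω)) inferInstance] := by
    have h := crr_aux_condexp (μ := μ) (ψ := fun p : ℝ × ℝ => min CY (max (-CY) p.1))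
      hZ hXVm (hY0.prodMk hY1) hZ01 hA2 (hpiM.comp hXVm) hpi_c hπbd01 hpi
      (measurable_const.min (measurable_const.max measurable_fst)) hY0
      (fun ω => by
        obtain ⟨hl, hr⟩ := abs_le.mp (hCY ω).1
        simp only
        rw [max_eq_right hl, min_eq_right hr])
      hCY0 (fun ω => (hCY ω).1)
    exact h
  -- step (2a)
  have hIntZY1 : Integrable (Z * Y1) μ := by
    refine crr_int_of_bdd (hZ.mul hY1).aestronglyMeasurable (C := 1 * CY) ?_
    refine ae_of_all _ fun ω => ?_
    rw [Pi.mul_apply, abs_mul]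
    exact mul_le_mul (hZabs ω) ((hCY ω).2) (abs_nonneg _) zero_le_one
  have hZcabs : ∀ ω, |((1:Ω → ℝ) - Z) ω| ≤ 1 := by
    intro ω
    rcases hZ01 ω with h | h <;> simp [Pi.sub_apply, h]
  have hIntZY0 : Integrable (((1:Ω → ℝ) - Z) * Y0) μ := by
    refine crr_int_of_bdd ((measurable_const.sub hZ).aestronglyMeasurable.mul
      hY0.aestronglyMeasurable) (C := 1 * CY) ?_
    refine ae_of_all _ fun ω => ?_
    rw [Pi.mul_apply, abs_mul]
    exact mul_le_mul (hZcabs ω) ((hCY ω).1) (abs_nonneg _) zero_le_one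
  have h2a : μ[Y | MeasurableSpace.comap (fun ω => (Z ω, X ω, V ω)) inferInstance]
      =ᵐ[μ] fun ω => Z ω * (μ[Y1 | MeasurableSpace.comap (fun ω => (Z ω, X ω, V ω)) inferInstance]) ω
        + (1 - Z ω) * (μ[Y0 | MeasurableSpace.comap (fun ω => (Z ω, X ω, V ω)) inferInstance]) ω := by
    have hY_eq : Y =ᵐ[μ] Z * Y1 + ((1:Ω → ℝ) - Z) * Y0 := by
      refine ae_of_all _ fun ω => ?_
      simp only [Pi.add_apply, Pi.mul_apply, Pi.sub_apply, Pi.one_apply]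
      exact hYdef ω
    have hm1 := condExp_mul_of_stronglyMeasurable_left
      (m := MeasurableSpace.comap (fun ω => (Z ω, X ω, V ω)) inferInstance)
      hZ_c.stronglyMeasurable hIntZY1 hIntY1
    have hm0 := condExp_mul_of_stronglyMeasurable_left
      (m := MeasurableSpace.comap (fun ω => (Z ω, X ω, V ω)) inferInstance)
      (f := (1:Ω → ℝ) - Z) (g := Y0)
      (stronglyMeasurable_const.sub hZ_c.stronglyMeasurable) hIntZY0 hIntY0
    calc μ[Y | MeasurableSpace.comap (fun ω => (Z ω, X ω, V ω)) inferInstance]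
        =ᵐ[μ] μ[Z * Y1 + ((1:Ω → ℝ) - Z) * Y0 |
            MeasurableSpace.comap (fun ω => (Z ω, X ω, V ω)) inferInstance] :=
          condExp_congr_ae hY_eq
      _ =ᵐ[μ] μ[Z * Y1 | MeasurableSpace.comap (fun ω => (Z ω, X ω, V ω)) inferInstance]
            + μ[((1:Ω → ℝ) - Z) * Y0 |
              MeasurableSpace.comap (fun ω => (Z ω, X ω, V ω)) inferInstance] :=
          condExp_add hIntZY1 hIntZY0 _
      _ =ᵐ[μ] _ := by
          filter_upwards [hm1, hm0] with ω e1 e2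
          rw [Pi.add_apply, e1, e2]
          simp [Pi.mul_apply, Pi.sub_apply, Pi.one_apply]
  -- step (2c)
  have h2c : (fun ω => mo (Z ω, X ω, V ω)) =ᵐ[μ] fun ω =>
      Z ω * (μ[Y1 | MeasurableSpace.comap (fun ω => (X ω, V ω)) inferInstance]) ω
        + (1 - Z ω) * (μ[Y0 | MeasurableSpace.comap (fun ω => (X ω, V ω)) inferInstance]) ω := by
    refine (hmo.trans h2a).trans ?_
    filter_upwards [hQ1, hQ0] with ω e1 e2
    rw [← e1, ← e2]
  set b1 := μ[Y1 | MeasurableSpace.comap (fun ω => (X ω, V ω)) inferInstance] with hb1def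
  set b0 := μ[Y0 | MeasurableSpace.comap (fun ω => (X ω, V ω)) inferInstance] with hb0def
  have hb1bd : ∀ᵐ ω ∂μ, |b1 ω| ≤ CY := by
    have h := ae_bdd_condExp_of_ae_bdd
      (m := MeasurableSpace.comap (fun ω => (X ω, V ω)) inferInstance)
      (μ := μ) (R := CY.toNNReal) (f := Y1)
      (ae_of_all _ fun ω => by rw [Real.coe_toNNReal _ hCY0]; exact (hCY ω).2)
    filter_upwards [h] with ω hω
    rwa [Real.coe_toNNReal _ hCY0] at hω
  have hb0bd : ∀ᵐ ω ∂μ, |b0 ω| ≤ CY := by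
    have h := ae_bdd_condExp_of_ae_bdd
      (m := MeasurableSpace.comap (fun ω => (X ω, V ω)) inferInstance)
      (μ := μ) (R := CY.toNNReal) (f := Y0)
      (ae_of_all _ fun ω => by rw [Real.coe_toNNReal _ hCY0]; exact (hCY ω).1)
    filter_upwards [h] with ω hω
    rwa [Real.coe_toNNReal _ hCY0] at hω
  have hCM0 : 0 ≤ CM :=
    le_trans (abs_nonneg _) (hCM (0, X (Classical.arbitrary Ω), V (Classical.arbitrary Ω)))
  -- Fact for j = 1
  have hFact1 : (fun ω => mo (1, X ω, V ω)) =ᵐ[μ] b1 := by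
    have hDsm : StronglyMeasurable[MeasurableSpace.comap (fun ω => (X ω, V ω)) inferInstance]
        (fun ω => mo (1, X ω, V ω) - b1 ω) :=
      ((hmoM.comp (measurable_const.prodMk hXV_c)).stronglyMeasurable).sub
        stronglyMeasurable_condExp
    have hIntD : Integrable ((fun ω => mo (1, X ω, V ω) - b1 ω) * Z) μ := by
      refine crr_int_of_bdd (((hDsm.mono hmXV).aestronglyMeasurable).mul
        hZ.aestronglyMeasurable) (C := (CM + CY) * 1) ?_
      filter_upwards [hb1bd] with ω hω
      rw [Pi.mul_apply, abs_mul]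
      refine mul_le_mul ?_ (hZabs ω) (abs_nonneg _) (by linarith)
      exact le_trans (abs_sub _ _) (add_le_add (hCM _) hω)
    have hzero : μ[(fun ω => mo (1, X ω, V ω) - b1 ω) * Z |
        MeasurableSpace.comap (fun ω => (X ω, V ω)) inferInstance] =ᵐ[μ] 0 := by
      have hZD : ((fun ω => mo (1, X ω, V ω) - b1 ω) * Z) =ᵐ[μ] (0 : Ω → ℝ) := by
        filter_upwards [h2c] with ω h
        rw [Pi.mul_apply, Pi.zero_apply]
        rcases hZ01 ω with hz | hz
        · simp [hz]
        · rw [hz] at h ⊢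
          have hmo1 : mo (1, X ω, V ω) = b1 ω := by rw [h]; ring
          simp [hmo1]
      exact (condExp_congr_ae hZD).trans (by rw [condExp_zero])
    have hmulD := condExp_mul_of_stronglyMeasurable_left
      (m := MeasurableSpace.comap (fun ω => (X ω, V ω)) inferInstance) hDsm hIntD hIntZ
    have hfin := hmulD.symm.trans hzero
    filter_upwards [hfin, hpi, hA3] with ω h1 h2 h3
    show mo (1, X ω, V ω) = b1 ω
    rw [Pi.mul_apply, Pi.zero_apply, ← h2] at h1
    rcases mul_eq_zero.mp h1 with h | h
    · exact sub_eq_zero.mp h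
    · exact absurd h (ne_of_gt h3.1)
  -- Fact for j = 0
  have hIntZc : Integrable ((1:Ω → ℝ) - Z) μ := by
    refine crr_int_of_bdd ((measurable_const.sub hZ).aestronglyMeasurable) (C := 1) ?_
    exact ae_of_all _ hZcabs
  have hcondZc : μ[(1:Ω → ℝ) - Z |
      MeasurableSpace.comap (fun ω => (X ω, V ω)) inferInstance] =ᵐ[μ]
      fun ω => 1 - (μ[Z | MeasurableSpace.comap (fun ω => (X ω, V ω)) inferInstance]) ω := by
    refine (condExp_sub (f := (1:Ω → ℝ)) (g := Z) (integrable_const 1) hIntZ _).trans ?_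
    have hcc : μ[(1:Ω → ℝ) | MeasurableSpace.comap (fun ω => (X ω, V ω)) inferInstance]
        = fun _ => (1:ℝ) := condExp_const hmXV 1
    refine ae_of_all _ fun ω => ?_
    rw [Pi.sub_apply, hcc]
  have hFact0 : (fun ω => mo (0, X ω, V ω)) =ᵐ[μ] b0 := by
    have hDsm : StronglyMeasurable[MeasurableSpace.comap (fun ω => (X ω, V ω)) inferInstance]
        (fun ω => mo (0, X ω, V ω) - b0 ω) :=
      ((hmoM.comp (measurable_const.prodMk hXV_c)).stronglyMeasurable).sub
        stronglyMeasurable_condExp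
    have hIntD : Integrable ((fun ω => mo (0, X ω, V ω) - b0 ω) * ((1:Ω → ℝ) - Z)) μ := by
      refine crr_int_of_bdd (((hDsm.mono hmXV).aestronglyMeasurable).mul
        ((measurable_const.sub hZ).aestronglyMeasurable)) (C := (CM + CY) * 1) ?_
      filter_upwards [hb0bd] with ω hω
      rw [Pi.mul_apply, abs_mul]
      refine mul_le_mul ?_ (hZcabs ω) (abs_nonneg _) (by linarith)
      exact le_trans (abs_sub _ _) (add_le_add (hCM _) hω)
    have hzero : μ[(fun ω => mo (0, X ω, V ω) - b0 ω) * ((1:Ω → ℝ) - Z) |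
        MeasurableSpace.comap (fun ω => (X ω, V ω)) inferInstance] =ᵐ[μ] 0 := by
      have hZD : ((fun ω => mo (0, X ω, V ω) - b0 ω) * ((1:Ω → ℝ) - Z)) =ᵐ[μ] (0 : Ω → ℝ) := by
        filter_upwards [h2c] with ω h
        rw [Pi.mul_apply, Pi.zero_apply, Pi.sub_apply, Pi.one_apply]
        rcases hZ01 ω with hz | hz
        · rw [hz] at h ⊢
          have hmo0 : mo (0, X ω, V ω) = b0 ω := by rw [h]; ring
          simp [hmo0]
        · simp [hz]
      exact (condExp_congr_ae hZD).trans (by rw [condExp_zero])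
    have hmulD := condExp_mul_of_stronglyMeasurable_left
      (m := MeasurableSpace.comap (fun ω => (X ω, V ω)) inferInstance) hDsm hIntD hIntZc
    have hfin := hmulD.symm.trans hzero
    filter_upwards [hfin, hcondZc, hpi, hA3] with ω h1 h1' h2 h3
    show mo (0, X ω, V ω) = b0 ω
    rw [Pi.mul_apply, Pi.zero_apply, h1', ← h2] at h1
    rcases mul_eq_zero.mp h1 with h | h
    · exact sub_eq_zero.mp h
    · exact absurd h (by intro hcontra; linarith [h3.2, sub_eq_zero.mp hcontra])
  -- selection step and conclusion
  have hρbd : ∀ᵐ ω ∂μ, |rho (X ω)| ≤ 1 := by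
    have h := ae_bdd_condExp_of_ae_bdd (m := MeasurableSpace.comap X inferInstance)
      (μ := μ) (R := 1) (f := R)
      (ae_of_all _ fun ω => by rw [NNReal.coe_one]; exact hRabs ω)
    filter_upwards [hrho, h] with ω h1 h2
    rw [show rho (X ω) = (μ[R | MeasurableSpace.comap X inferInstance]) ω from h1]
    simpa using h2
  have hρ0 : ∀ᵐ ω ∂μ, 0 ≤ rho (X ω) := by
    filter_upwards [hA4] with ω h using le_of_lt h
  have hVG : ∀ B : Set 𝒱, MeasurableSet B → ∃ t : Set (ℝ × ℝ × 𝒱),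
      MeasurableSet t ∧ (fun ω => (Y ω, Z ω, V ω)) ⁻¹' t = V ⁻¹' B := by
    intro B hB
    exact ⟨Set.univ ×ˢ Set.univ ×ˢ B,
      MeasurableSet.univ.prod (MeasurableSet.univ.prod hB),
      by ext ω; simp [Set.mem_prod]⟩
  have hKey : ∀ (jv : ℝ) (Wj : Ω → ℝ), Integrable Wj μ →
      ((fun ω => mo (jv, X ω, V ω)) =ᵐ[μ]
        μ[Wj | MeasurableSpace.comap (fun ω => (X ω, V ω)) inferInstance]) →
      ∫ ω, (R ω / rho (X ω)) * mo (jv, X ω, V ω) ∂μ = ∫ ω, Wj ω ∂μ := by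
    intro jv Wj hIntWj hFact
    have hψM : Measurable (fun p : 𝒳 × 𝒱 => mo (jv, p) / rho p.1) :=
      (hmoM.comp (measurable_const.prodMk measurable_id)).div (hrhoM.comp measurable_fst)
    have hsel := crr_aux_select (μ := μ) hX hV hR hYZVm hR01 hA1 hVG
      (hrhoM.comp hX) hrho_c hρbd hρ0 hrho hψM
    calc ∫ ω, (R ω / rho (X ω)) * mo (jv, X ω, V ω) ∂μ
        = ∫ ω, R ω * ((fun p : 𝒳 × 𝒱 => mo (jv, p) / rho p.1) (X ω, V ω)) ∂μ := by
          refine integral_congr_ae (ae_of_all _ fun ω => ?_)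
          show (R ω / rho (X ω)) * mo (jv, X ω, V ω)
            = R ω * (mo (jv, X ω, V ω) / rho (X ω))
          rw [div_mul_eq_mul_div, mul_div_assoc]
      _ = ∫ ω, rho (X ω) * ((fun p : 𝒳 × 𝒱 => mo (jv, p) / rho p.1) (X ω, V ω)) ∂μ := hsel
      _ = ∫ ω, mo (jv, X ω, V ω) ∂μ := by
          refine integral_congr_ae ?_
          filter_upwards [hA4] with ω h
          show rho (X ω) * (mo (jv, X ω, V ω) / rho (X ω)) = mo (jv, X ω, V ω)
          rw [mul_comm, div_mul_cancel₀ _ (ne_of_gt h)]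
      _ = ∫ ω, (μ[Wj | MeasurableSpace.comap (fun ω => (X ω, V ω)) inferInstance]) ω ∂μ :=
          integral_congr_ae hFact
      _ = ∫ ω, Wj ω ∂μ := integral_condExp hmXV
  have hI1 := hKey 1 Y1 hIntY1 hFact1
  have hI0 := hKey 0 Y0 hIntY0 hFact0
  rw [hI0, hI1]
  exact ⟨hY0ne, rfl⟩
end

section
/- (Proposition 2(c), identification of the causal risk ratio via imputation model and outcome mean) Under Assumptions (A1)–(A4) and E[Y0] ≠ 0, one has E[δ(0,X)] ≠ 0 and ξ = E[δ(1,X)] / E[δ(0,X)]. -/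
open MeasureTheory ProbabilityTheory

section Aux

variable {Ω : Type*}

lemma integrable_of_abs_le {_ : MeasurableSpace Ω} {μ : Measure Ω} [IsFiniteMeasure μ]
    {f : Ω → ℝ} (hf : AEStronglyMeasurable f μ) {C : ℝ} (h : ∀ ω, |f ω| ≤ C) :
    Integrable f μ :=
  memLp_one_iff_integrable.mp
    (MemLp.of_bound hf C (Filter.Eventually.of_forall fun ω => by
      simpa [Real.norm_eq_abs] using h ω))

/-- Product formula for the conditional expectation of conditionally independent
bounded random variables. -/
lemma condexp_mul_of_condIndepFun {m' : MeasurableSpace Ω}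
    [mΩ : MeasurableSpace Ω] [StandardBorelSpace Ω] [Nonempty Ω]
    (μ : Measure Ω) [IsProbabilityMeasure μ] (hm' : m' ≤ mΩ)
    {f g : Ω → ℝ} (hf : Measurable f) (hg : Measurable g)
    {Cf Cg : ℝ} (hbf : ∀ ω, |f ω| ≤ Cf) (hbg : ∀ ω, |g ω| ≤ Cg)
    (h : CondIndepFun (μ := μ) m' hm' f g) :
    μ[fun ω => f ω * g ω | m'] =ᵐ[μ] fun ω => (μ[f|m']) ω * (μ[g|m']) ω := by
  have hfin : Integrable f μ := integrable_of_abs_le hf.aestronglyMeasurable hbf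
  have hgin : Integrable g μ := integrable_of_abs_le hg.aestronglyMeasurable hbg
  have hCf0 : 0 ≤ Cf := le_trans (abs_nonneg _) (hbf (Classical.arbitrary Ω))
  have hfgin : Integrable (fun ω => f ω * g ω) μ := by
    refine integrable_of_abs_le (hf.mul hg).aestronglyMeasurable (C := Cf * Cg) fun ω => ?_
    rw [abs_mul]
    exact mul_le_mul (hbf ω) (hbg ω) (abs_nonneg _) hCf0
  -- a.e. independence under the conditional expectation kernel
  have hsets := Kernel.indepFun_iff_measure_inter_preimage_eq_mul.mp h
  have hae : ∀ᵐ ω ∂(μ.trim hm'), ∀ q r : ℚ,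
      condExpKernel μ m' ω (f ⁻¹' Set.Iic (q : ℝ) ∩ g ⁻¹' Set.Iic (r : ℝ))
        = condExpKernel μ m' ω (f ⁻¹' Set.Iic (q : ℝ))
          * condExpKernel μ m' ω (g ⁻¹' Set.Iic (r : ℝ)) := by
    rw [ae_all_iff]
    intro q
    rw [ae_all_iff]
    intro r
    exact hsets _ _ measurableSet_Iic measurableSet_Iic
  have hae' := ae_of_ae_trim hm' hae
  have hgen : (inferInstance : MeasurableSpace ℝ)
      = MeasurableSpace.generateFrom (⋃ a : ℚ, {Set.Iic (a : ℝ)}) := by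
    rw [BorelSpace.measurable_eq (α := ℝ)]
    exact Real.borel_eq_generateFrom_Iic_rat
  have piS : IsPiSystem (⋃ a : ℚ, {Set.Iic (a : ℝ)}) := Real.isPiSystem_Iic_rat
  have hind : ∀ᵐ ω ∂μ, IndepFun f g (condExpKernel μ m' ω) := by
    filter_upwards [hae'] with ω hω
    have hIndep : Indep (MeasurableSpace.comap f inferInstance)
        (MeasurableSpace.comap g inferInstance) (condExpKernel μ m' ω) := by
      refine IndepSets.indep hf.comap_le hg.comap_le (piS.comap f) (piS.comap g) ?_ ?_ ?_
      · rw [hgen, MeasurableSpace.comap_generateFrom]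
        rfl
      · rw [hgen, MeasurableSpace.comap_generateFrom]
        rfl
      · rintro t1 t2 ⟨s, hs, rfl⟩ ⟨t, ht, rfl⟩
        simp only [Set.mem_iUnion, Set.mem_singleton_iff] at hs ht
        obtain ⟨q, rfl⟩ := hs
        obtain ⟨r, rfl⟩ := ht
        exact ae_of_all _ fun _ => hω q r
    exact hIndep
  have e1 := condExp_ae_eq_integral_condExpKernel hm' hfgin
  have e2 := condExp_ae_eq_integral_condExpKernel hm' hfin
  have e3 := condExp_ae_eq_integral_condExpKernel hm' hgin
  filter_upwards [e1, e2, e3, hind] with ω h1 h2 h3 h4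
  rw [h1, h2, h3]
  exact h4.integral_mul_eq_mul_integral hf.aestronglyMeasurable hg.aestronglyMeasurable

end Aux

theorem crr_identification_imputation
    {Ω 𝒳 𝒱 : Type*}
    [MeasurableSpace Ω] [StandardBorelSpace Ω] [Nonempty Ω]
    [MeasurableSpace 𝒳] [StandardBorelSpace 𝒳]
    [MeasurableSpace 𝒱] [StandardBorelSpace 𝒱]
    (μ : Measure Ω) [IsProbabilityMeasure μ]
    (X : Ω → 𝒳) (V : Ω → 𝒱) (Z R Y0 Y1 : Ω → ℝ)
    (hX : Measurable X) (hV : Measurable V) (hZ : Measurable Z)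
    (hR : Measurable R) (hY0 : Measurable Y0) (hY1 : Measurable Y1)
    (hZ01 : ∀ ω, Z ω = 0 ∨ Z ω = 1) (hR01 : ∀ ω, R ω = 0 ∨ R ω = 1)
    (hYbd : ∃ C, ∀ ω, |Y0 ω| ≤ C ∧ |Y1 ω| ≤ C)
    (Y : Ω → ℝ) (hYdef : ∀ ω, Y ω = Z ω * Y1 ω + (1 - Z ω) * Y0 ω)
    (pi : 𝒳 × 𝒱 → ℝ) (rho : 𝒳 → ℝ)
    (hpiM : Measurable pi) (hrhoM : Measurable rho)
    (hpi : (fun ω => pi (X ω, V ω)) =ᵐ[μ]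
      μ[Z | MeasurableSpace.comap (fun ω => (X ω, V ω)) inferInstance])
    (hrho : (fun ω => rho (X ω)) =ᵐ[μ]
      μ[R | MeasurableSpace.comap X inferInstance])
    (hA1 : CondIndepFun (MeasurableSpace.comap X inferInstance)
      (measurable_iff_comap_le.mp hX) R (fun ω => (Y ω, Z ω, V ω)) μ)
    (hA2 : CondIndepFun (MeasurableSpace.comap (fun ω => (X ω, V ω)) inferInstance)
      (measurable_iff_comap_le.mp (hX.prodMk hV)) Z (fun ω => (Y0 ω, Y1 ω)) μ)
    (hA3 : ∀ᵐ ω ∂μ, 0 < pi (X ω, V ω) ∧ pi (X ω, V ω) < 1)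
    (hA4 : ∀ᵐ ω ∂μ, 0 < rho (X ω))
    (mo : ℝ × 𝒳 × 𝒱 → ℝ) (hmoM : Measurable mo) (hmoBd : ∃ C, ∀ p, |mo p| ≤ C)
    (hmo : (fun ω => mo (Z ω, X ω, V ω)) =ᵐ[μ]
      μ[Y | MeasurableSpace.comap (fun ω => (Z ω, X ω, V ω)) inferInstance])
    (del : ℝ → 𝒳 → ℝ) (hdelM : ∀ z, Measurable (del z))
    (hdel : ∀ z ∈ ({0, 1} : Set ℝ),
      (fun ω => del z (X ω)) =ᵐ[μ]
        μ[(fun ω => mo (z, X ω, V ω)) | MeasurableSpace.comap X inferInstance])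
    (hY0ne : ∫ ω, Y0 ω ∂μ ≠ 0) :
    (∫ ω, del 0 (X ω) ∂μ ≠ 0) ∧
    (∫ ω, Y1 ω ∂μ) / (∫ ω, Y0 ω ∂μ)
      = (∫ ω, del 1 (X ω) ∂μ) / ∫ ω, del 0 (X ω) ∂μ := by
  obtain ⟨C, hC⟩ := hYbd
  obtain ⟨Cm, hCm⟩ := hmoBd
  -- notation
  have hmX : (MeasurableSpace.comap X inferInstance) ≤ _ := measurable_iff_comap_le.mp hX
  have hmXV : (MeasurableSpace.comap (fun ω => (X ω, V ω)) inferInstance) ≤ _ := measurable_iff_comap_le.mp (hX.prodMk hV)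
  have hmZXV : (MeasurableSpace.comap (fun ω => (Z ω, X ω, V ω)) inferInstance) ≤ _ := measurable_iff_comap_le.mp (hZ.prodMk (hX.prodMk hV))
  have hle : (MeasurableSpace.comap (fun ω => (X ω, V ω)) inferInstance) ≤ (MeasurableSpace.comap (fun ω => (Z ω, X ω, V ω)) inferInstance) := by
    have hcomp : (fun ω => (X ω, V ω))
        = Prod.snd ∘ (fun ω => (Z ω, X ω, V ω)) := rfl
    rw [hcomp, ← MeasurableSpace.comap_comp]
    exact MeasurableSpace.comap_mono (measurable_iff_comap_le.mp measurable_snd)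
  -- measurability within the sub-σ-algebras
  have hpairM : Measurable[(MeasurableSpace.comap (fun ω => (X ω, V ω)) inferInstance)] (fun ω => (X ω, V ω)) := measurable_iff_comap_le.mpr le_rfl
  have htripM : Measurable[(MeasurableSpace.comap (fun ω => (Z ω, X ω, V ω)) inferInstance)] (fun ω => (Z ω, X ω, V ω)) := measurable_iff_comap_le.mpr le_rfl
  have hZm : Measurable[(MeasurableSpace.comap (fun ω => (Z ω, X ω, V ω)) inferInstance)] Z := measurable_fst.comp htripM
  have hmo1M : Measurable[(MeasurableSpace.comap (fun ω => (X ω, V ω)) inferInstance)] (fun ω => mo (1, X ω, V ω)) :=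
    (hmoM.comp ((measurable_const (a := (1:ℝ))).prodMk measurable_id)).comp hpairM
  have hmo0M : Measurable[(MeasurableSpace.comap (fun ω => (X ω, V ω)) inferInstance)] (fun ω => mo (0, X ω, V ω)) :=
    (hmoM.comp ((measurable_const (a := (0:ℝ))).prodMk measurable_id)).comp hpairM
  -- basic bounds
  have hZbd : ∀ ω, |Z ω| ≤ 1 := fun ω => by rcases hZ01 ω with h | h <;> simp [h]
  have h1Zbd : ∀ ω, |1 - Z ω| ≤ 1 := fun ω => by rcases hZ01 ω with h | h <;> simp [h]
  have hYbd' : ∀ ω, |Y ω| ≤ C := fun ω => by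
    rcases hZ01 ω with h | h <;> simp [hYdef ω, h, (hC ω).1, (hC ω).2]
  have hYM : Measurable Y := by
    have : Y = fun ω => Z ω * Y1 ω + (1 - Z ω) * Y0 ω := funext hYdef
    rw [this]
    exact (hZ.mul hY1).add ((measurable_const.sub hZ).mul hY0)
  -- integrability
  have hYint : Integrable Y μ := integrable_of_abs_le hYM.aestronglyMeasurable hYbd'
  have hZY1int : Integrable (fun ω => Z ω * Y1 ω) μ := by
    refine integrable_of_abs_le (hZ.mul hY1).aestronglyMeasurable (C := C) fun ω => ?_
    rcases hZ01 ω with h | h <;> simp [h, (hC ω).2, abs_nonneg, le_trans (abs_nonneg (Y1 ω)) ((hC ω).2)]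
  have hZY0int : Integrable (fun ω => (1 - Z ω) * Y0 ω) μ := by
    refine integrable_of_abs_le ((measurable_const.sub hZ).mul hY0).aestronglyMeasurable
      (C := C) fun ω => ?_
    rcases hZ01 ω with h | h <;> simp [h, (hC ω).1, le_trans (abs_nonneg (Y0 ω)) ((hC ω).1)]
  have hY1int : Integrable Y1 μ := integrable_of_abs_le hY1.aestronglyMeasurable fun ω => (hC ω).2
  have hY0int : Integrable Y0 μ := integrable_of_abs_le hY0.aestronglyMeasurable fun ω => (hC ω).1
  have hZint : Integrable Z μ := integrable_of_abs_le hZ.aestronglyMeasurable hZbd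
  have hmo1int : Integrable (fun ω => mo (1, X ω, V ω)) μ :=
    integrable_of_abs_le (hmo1M.mono hmXV le_rfl).aestronglyMeasurable fun ω => hCm _
  have hmo0int : Integrable (fun ω => mo (0, X ω, V ω)) μ :=
    integrable_of_abs_le (hmo0M.mono hmXV le_rfl).aestronglyMeasurable fun ω => hCm _
  have hZmo1int : Integrable (fun ω => Z ω * mo (1, X ω, V ω)) μ := by
    refine integrable_of_abs_le (hZ.mul (hmo1M.mono hmXV le_rfl)).aestronglyMeasurable
      (C := Cm) fun ω => ?_
    rw [abs_mul]
    calc |Z ω| * |mo (1, X ω, V ω)| ≤ 1 * Cm := by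
          exact mul_le_mul (hZbd ω) (hCm _) (abs_nonneg _) zero_le_one
      _ = Cm := one_mul _
  have hZmo0int : Integrable (fun ω => (1 - Z ω) * mo (0, X ω, V ω)) μ := by
    refine integrable_of_abs_le ((measurable_const.sub hZ).mul
      (hmo0M.mono hmXV le_rfl)).aestronglyMeasurable (C := Cm) fun ω => ?_
    rw [abs_mul]
    calc |1 - Z ω| * |mo (0, X ω, V ω)| ≤ 1 * Cm := by
          exact mul_le_mul (h1Zbd ω) (hCm _) (abs_nonneg _) zero_le_one
      _ = Cm := one_mul _
  -- pointwise identities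
  have hZY : (fun ω => Z ω * Y ω) = fun ω => Z ω * Y1 ω := by
    funext ω; rcases hZ01 ω with h | h <;> simp [hYdef ω, h]
  have h1ZY : (fun ω => (1 - Z ω) * Y ω) = fun ω => (1 - Z ω) * Y0 ω := by
    funext ω; rcases hZ01 ω with h | h <;> simp [hYdef ω, h]
  have hZmo : (fun ω => Z ω * mo (Z ω, X ω, V ω)) = fun ω => Z ω * mo (1, X ω, V ω) := by
    funext ω; rcases hZ01 ω with h | h <;> simp [h]
  have h1Zmo : (fun ω => (1 - Z ω) * mo (Z ω, X ω, V ω))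
      = fun ω => (1 - Z ω) * mo (0, X ω, V ω) := by
    funext ω; rcases hZ01 ω with h | h <;> simp [h]
  -- conditional expectation at the level of (MeasurableSpace.comap (fun ω => (Z ω, X ω, V ω)) inferInstance) (pull-out of Z)
  have hCE1 : μ[fun ω => Z ω * Y1 ω | (MeasurableSpace.comap (fun ω => (Z ω, X ω, V ω)) inferInstance)] =ᵐ[μ] fun ω => Z ω * mo (1, X ω, V ω) := by
    have hpull : μ[fun ω => Z ω * Y ω | (MeasurableSpace.comap (fun ω => (Z ω, X ω, V ω)) inferInstance)] =ᵐ[μ] fun ω => Z ω * (μ[Y | (MeasurableSpace.comap (fun ω => (Z ω, X ω, V ω)) inferInstance)]) ω :=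
      condExp_mul_of_stronglyMeasurable_left hZm.stronglyMeasurable (by rw [show (Z * Y) = fun ω => Z ω * Y ω from rfl, hZY]; exact hZY1int) hYint
    rw [← hZY]
    refine hpull.trans ?_
    have := hmo.symm
    calc (fun ω => Z ω * (μ[Y | (MeasurableSpace.comap (fun ω => (Z ω, X ω, V ω)) inferInstance)]) ω)
        =ᵐ[μ] fun ω => Z ω * mo (Z ω, X ω, V ω) := by
          filter_upwards [this] with ω hω; rw [hω]
      _ = fun ω => Z ω * mo (1, X ω, V ω) := hZmo
  have hCE0 : μ[fun ω => (1 - Z ω) * Y0 ω | (MeasurableSpace.comap (fun ω => (Z ω, X ω, V ω)) inferInstance)]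
      =ᵐ[μ] fun ω => (1 - Z ω) * mo (0, X ω, V ω) := by
    have h1Zm : Measurable[(MeasurableSpace.comap (fun ω => (Z ω, X ω, V ω)) inferInstance)] (fun ω => 1 - Z ω) := measurable_const.sub hZm
    have hpull : μ[fun ω => (1 - Z ω) * Y ω | (MeasurableSpace.comap (fun ω => (Z ω, X ω, V ω)) inferInstance)]
        =ᵐ[μ] fun ω => (1 - Z ω) * (μ[Y | (MeasurableSpace.comap (fun ω => (Z ω, X ω, V ω)) inferInstance)]) ω :=
      condExp_mul_of_stronglyMeasurable_left h1Zm.stronglyMeasurable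
        (by rw [show ((fun ω => 1 - Z ω) * Y) = fun ω => (1 - Z ω) * Y ω from rfl, h1ZY]; exact hZY0int) hYint
    rw [← h1ZY]
    refine hpull.trans ?_
    calc (fun ω => (1 - Z ω) * (μ[Y | (MeasurableSpace.comap (fun ω => (Z ω, X ω, V ω)) inferInstance)]) ω)
        =ᵐ[μ] fun ω => (1 - Z ω) * mo (Z ω, X ω, V ω) := by
          filter_upwards [hmo.symm] with ω hω; rw [hω]
      _ = fun ω => (1 - Z ω) * mo (0, X ω, V ω) := h1Zmo
  -- tower property down to (MeasurableSpace.comap (fun ω => (X ω, V ω)) inferInstance), then pull out the (MeasurableSpace.comap (fun ω => (X ω, V ω)) inferInstance)-measurable factor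
  have hTower1 : μ[fun ω => Z ω * Y1 ω | (MeasurableSpace.comap (fun ω => (X ω, V ω)) inferInstance)]
      =ᵐ[μ] fun ω => mo (1, X ω, V ω) * (μ[Z | (MeasurableSpace.comap (fun ω => (X ω, V ω)) inferInstance)]) ω := by
    calc μ[fun ω => Z ω * Y1 ω | (MeasurableSpace.comap (fun ω => (X ω, V ω)) inferInstance)]
        =ᵐ[μ] μ[μ[fun ω => Z ω * Y1 ω | (MeasurableSpace.comap (fun ω => (Z ω, X ω, V ω)) inferInstance)] | (MeasurableSpace.comap (fun ω => (X ω, V ω)) inferInstance)] := (condExp_condExp_of_le hle hmZXV).symm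
      _ =ᵐ[μ] μ[fun ω => Z ω * mo (1, X ω, V ω) | (MeasurableSpace.comap (fun ω => (X ω, V ω)) inferInstance)] := condExp_congr_ae hCE1
      _ = μ[fun ω => mo (1, X ω, V ω) * Z ω | (MeasurableSpace.comap (fun ω => (X ω, V ω)) inferInstance)] := by
          rw [show (fun ω => Z ω * mo (1, X ω, V ω))
            = fun ω => mo (1, X ω, V ω) * Z ω from funext fun ω => mul_comm _ _]
      _ =ᵐ[μ] fun ω => mo (1, X ω, V ω) * (μ[Z | (MeasurableSpace.comap (fun ω => (X ω, V ω)) inferInstance)]) ω :=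
          condExp_mul_of_stronglyMeasurable_left hmo1M.stronglyMeasurable
            (by rw [show ((fun ω => mo (1, X ω, V ω)) * Z) = fun ω => mo (1, X ω, V ω) * Z ω from rfl]
                exact (by simpa [mul_comm] using hZmo1int)) hZint
  have hTower0 : μ[fun ω => (1 - Z ω) * Y0 ω | (MeasurableSpace.comap (fun ω => (X ω, V ω)) inferInstance)]
      =ᵐ[μ] fun ω => mo (0, X ω, V ω) * (μ[fun ω => 1 - Z ω | (MeasurableSpace.comap (fun ω => (X ω, V ω)) inferInstance)]) ω := by
    calc μ[fun ω => (1 - Z ω) * Y0 ω | (MeasurableSpace.comap (fun ω => (X ω, V ω)) inferInstance)]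
        =ᵐ[μ] μ[μ[fun ω => (1 - Z ω) * Y0 ω | (MeasurableSpace.comap (fun ω => (Z ω, X ω, V ω)) inferInstance)] | (MeasurableSpace.comap (fun ω => (X ω, V ω)) inferInstance)] := (condExp_condExp_of_le hle hmZXV).symm
      _ =ᵐ[μ] μ[fun ω => (1 - Z ω) * mo (0, X ω, V ω) | (MeasurableSpace.comap (fun ω => (X ω, V ω)) inferInstance)] := condExp_congr_ae hCE0
      _ = μ[fun ω => mo (0, X ω, V ω) * (1 - Z ω) | (MeasurableSpace.comap (fun ω => (X ω, V ω)) inferInstance)] := by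
          rw [show (fun ω => (1 - Z ω) * mo (0, X ω, V ω))
            = fun ω => mo (0, X ω, V ω) * (1 - Z ω) from funext fun ω => mul_comm _ _]
      _ =ᵐ[μ] fun ω => mo (0, X ω, V ω) * (μ[fun ω => 1 - Z ω | (MeasurableSpace.comap (fun ω => (X ω, V ω)) inferInstance)]) ω :=
          condExp_mul_of_stronglyMeasurable_left hmo0M.stronglyMeasurable
            (by rw [show ((fun ω => mo (0, X ω, V ω)) * fun ω => 1 - Z ω)
                  = fun ω => mo (0, X ω, V ω) * (1 - Z ω) from rfl]
                exact (by simpa [mul_comm] using hZmo0int))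
            (integrable_const (1:ℝ) |>.sub hZint)
  -- conditional independence product formulas
  have hCI1 : CondIndepFun (MeasurableSpace.comap (fun ω => (X ω, V ω)) inferInstance) hmXV Z Y1 μ := hA2.comp measurable_id measurable_snd
  have hCI0 : CondIndepFun (MeasurableSpace.comap (fun ω => (X ω, V ω)) inferInstance) hmXV (fun ω => 1 - Z ω) Y0 μ :=
    hA2.comp (measurable_const.sub measurable_id) measurable_fst
  have hProd1 : μ[fun ω => Z ω * Y1 ω | (MeasurableSpace.comap (fun ω => (X ω, V ω)) inferInstance)]
      =ᵐ[μ] fun ω => (μ[Z | (MeasurableSpace.comap (fun ω => (X ω, V ω)) inferInstance)]) ω * (μ[Y1 | (MeasurableSpace.comap (fun ω => (X ω, V ω)) inferInstance)]) ω :=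
    condexp_mul_of_condIndepFun μ hmXV hZ hY1 hZbd (fun ω => (hC ω).2) hCI1
  have hProd0 : μ[fun ω => (1 - Z ω) * Y0 ω | (MeasurableSpace.comap (fun ω => (X ω, V ω)) inferInstance)]
      =ᵐ[μ] fun ω => (μ[fun ω => 1 - Z ω | (MeasurableSpace.comap (fun ω => (X ω, V ω)) inferInstance)]) ω * (μ[Y0 | (MeasurableSpace.comap (fun ω => (X ω, V ω)) inferInstance)]) ω :=
    condexp_mul_of_condIndepFun μ hmXV (measurable_const.sub hZ) hY0 h1Zbd
      (fun ω => (hC ω).1) hCI0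
  -- conditional expectations of Z and 1 - Z
  have hcondZ : μ[Z | (MeasurableSpace.comap (fun ω => (X ω, V ω)) inferInstance)] =ᵐ[μ] fun ω => pi (X ω, V ω) := hpi.symm
  have hcond1Z : μ[fun ω => 1 - Z ω | (MeasurableSpace.comap (fun ω => (X ω, V ω)) inferInstance)] =ᵐ[μ] fun ω => 1 - pi (X ω, V ω) := by
    have hsub : μ[fun ω => 1 - Z ω | (MeasurableSpace.comap (fun ω => (X ω, V ω)) inferInstance)] =ᵐ[μ] μ[fun _ => (1:ℝ) | (MeasurableSpace.comap (fun ω => (X ω, V ω)) inferInstance)] - μ[Z | (MeasurableSpace.comap (fun ω => (X ω, V ω)) inferInstance)] :=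
      condExp_sub (integrable_const 1) hZint _
    refine hsub.trans ?_
    have hone : μ[fun _ => (1:ℝ) | (MeasurableSpace.comap (fun ω => (X ω, V ω)) inferInstance)] = fun _ => (1:ℝ) := condExp_const hmXV 1
    filter_upwards [hcondZ] with ω hω
    simp [hone, hω]
  -- identify mo (z, X, V) with the conditional expectations of Y1, Y0
  have hkey1 : (fun ω => mo (1, X ω, V ω)) =ᵐ[μ] μ[Y1 | (MeasurableSpace.comap (fun ω => (X ω, V ω)) inferInstance)] := by
    filter_upwards [hTower1, hProd1, hcondZ, hA3] with ω h1 h2 h3 h4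
    have : mo (1, X ω, V ω) * pi (X ω, V ω) = pi (X ω, V ω) * (μ[Y1 | (MeasurableSpace.comap (fun ω => (X ω, V ω)) inferInstance)]) ω := by
      rw [← h3]; rw [← h1, h2]
    have := this.trans rfl
    rw [mul_comm] at this
    exact mul_left_cancel₀ (ne_of_gt h4.1) this
  have hkey0 : (fun ω => mo (0, X ω, V ω)) =ᵐ[μ] μ[Y0 | (MeasurableSpace.comap (fun ω => (X ω, V ω)) inferInstance)] := by
    filter_upwards [hTower0, hProd0, hcond1Z, hA3] with ω h1 h2 h3 h4
    have hne : (1 : ℝ) - pi (X ω, V ω) ≠ 0 := by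
      have := h4.2; intro hc; nlinarith
    have : mo (0, X ω, V ω) * (1 - pi (X ω, V ω))
        = (1 - pi (X ω, V ω)) * (μ[Y0 | (MeasurableSpace.comap (fun ω => (X ω, V ω)) inferInstance)]) ω := by
      rw [← h3]; rw [← h1, h2]
    rw [mul_comm] at this
    exact mul_left_cancel₀ hne this
  -- compute the integrals
  have hint1 : ∫ ω, del 1 (X ω) ∂μ = ∫ ω, Y1 ω ∂μ := by
    have h01 : (1 : ℝ) ∈ ({0, 1} : Set ℝ) := by simp
    calc ∫ ω, del 1 (X ω) ∂μ
        = ∫ ω, (μ[(fun ω => mo (1, X ω, V ω)) | (MeasurableSpace.comap X inferInstance)]) ω ∂μ := integral_congr_ae (hdel 1 h01)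
      _ = ∫ ω, mo (1, X ω, V ω) ∂μ := integral_condExp hmX
      _ = ∫ ω, (μ[Y1 | (MeasurableSpace.comap (fun ω => (X ω, V ω)) inferInstance)]) ω ∂μ := integral_congr_ae hkey1
      _ = ∫ ω, Y1 ω ∂μ := integral_condExp hmXV
  have hint0 : ∫ ω, del 0 (X ω) ∂μ = ∫ ω, Y0 ω ∂μ := by
    have h00 : (0 : ℝ) ∈ ({0, 1} : Set ℝ) := by simp
    calc ∫ ω, del 0 (X ω) ∂μ
        = ∫ ω, (μ[(fun ω => mo (0, X ω, V ω)) | (MeasurableSpace.comap X inferInstance)]) ω ∂μ := integral_congr_ae (hdel 0 h00)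
      _ = ∫ ω, mo (0, X ω, V ω) ∂μ := integral_condExp hmX
      _ = ∫ ω, (μ[Y0 | (MeasurableSpace.comap (fun ω => (X ω, V ω)) inferInstance)]) ω ∂μ := integral_congr_ae hkey0
      _ = ∫ ω, Y0 ω ∂μ := integral_condExp hmXV
  rw [hint0, hint1]
  exact ⟨hY0ne, rfl⟩
end
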